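/- arXiv:2306.03161 — 7 statements merged into one kernel-verified Lean document; each statement's English description precedes it below -/
import Mathlib

section
/- Let n ≥ 1 and let x, y, z ∈ F₂ⁿ. Then the uniform average over all n×n matrices A over F₂ satisfies 2^{−n²} · Σ_{A ∈ F₂^{n×n}} (−1)^{xᵀAx + yᵀAy + zᵀAz} = [x=y][z=0] + [x=z][y=0] + [y=z][x=0] − 2·[x=0][y=0][z=0], where [P] denotes 1 if the condition P holds and 0 otherwise, and the exponent is computed in F₂ with (−1)^b meaning 1 if b = 0 and −1 if b = 1. -/
open Matrix

/-- `(-1)^b` for `b : ZMod 2`, as a real number. -/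
def chi (b : ZMod 2) : ℝ := if b = 0 then 1 else -1

lemma chi_one_add (b : ZMod 2) : chi (1 + b) = -chi b := by
  have h : (1 + 1 : ZMod 2) = 0 := rfl
  rcases (by decide : ∀ c : ZMod 2, c = 0 ∨ c = 1) b with rfl | rfl <;> simp [chi, h]

lemma zmod2_ne_zero {a : ZMod 2} (h : a ≠ 0) : a = 1 := by
  revert h; revert a; decide

/-- Character sum over all matrices. -/
lemma sum_chi_matrix (n : ℕ) (M : Matrix (Fin n) (Fin n) (ZMod 2)) :
    ∑ A : Matrix (Fin n) (Fin n) (ZMod 2), chi (∑ i, ∑ j, A i j * M i j)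
      = if M = 0 then (2 : ℝ) ^ (n ^ 2) else 0 := by
  by_cases hM : M = 0
  · subst hM
    simp only [Matrix.zero_apply, mul_zero, Finset.sum_const_zero, if_true]
    have : chi 0 = 1 := rfl
    simp only [this, Finset.sum_const, Finset.card_univ, nsmul_eq_mul, mul_one]
    have hc : Fintype.card (Matrix (Fin n) (Fin n) (ZMod 2)) = 2 ^ (n ^ 2) := by
      show Fintype.card (Fin n → Fin n → ZMod 2) = 2 ^ (n ^ 2)
      simp [Fintype.card_fun, ← pow_mul, sq]
    rw [hc]; push_cast; ring
  · rw [if_neg hM]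
    obtain ⟨i₀, j₀, h0⟩ : ∃ i j, M i j ≠ 0 := by
      by_contra h; push_neg at h; exact hM (by ext i j; simp [h i j])
    have h1 : M i₀ j₀ = 1 := zmod2_ne_zero h0
    set E : Matrix (Fin n) (Fin n) (ZMod 2) :=
      fun i j => if i = i₀ ∧ j = j₀ then 1 else 0 with hEdef
    set S := ∑ A : Matrix (Fin n) (Fin n) (ZMod 2), chi (∑ i, ∑ j, A i j * M i j) with hS
    have hEsum : ∀ A : Matrix (Fin n) (Fin n) (ZMod 2),
        (∑ i, ∑ j, (E + A) i j * M i j) = 1 + ∑ i, ∑ j, A i j * M i j := by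
      intro A
      have : ∀ i j, (E + A) i j * M i j = E i j * M i j + A i j * M i j := by
        intro i j
        show (E i j + A i j) * M i j = _
        ring
      simp only [this, Finset.sum_add_distrib]
      congr 1
      have : ∀ i j, E i j * M i j =
          if i = i₀ then (if j = j₀ then M i₀ j₀ else 0) else 0 := by
        intro i j
        by_cases hi : i = i₀ <;> by_cases hj : j = j₀ <;>
          simp [hEdef, hi, hj]
      simp [this, h1]
    have hflip : S = -S := by
      have := Fintype.sum_equiv (Equiv.addLeft E)
        (fun A => chi (∑ i, ∑ j, ((Equiv.addLeft E) A) i j * M i j))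
        (fun A => chi (∑ i, ∑ j, A i j * M i j)) (fun A => rfl)
      calc S = ∑ A : Matrix (Fin n) (Fin n) (ZMod 2),
            chi (∑ i, ∑ j, (E + A) i j * M i j) := this.symm
        _ = ∑ A : Matrix (Fin n) (Fin n) (ZMod 2),
            -chi (∑ i, ∑ j, A i j * M i j) := by
            refine Finset.sum_congr rfl fun A _ => ?_
            rw [hEsum A, chi_one_add]
        _ = -S := by rw [← Finset.sum_neg_distrib]
    linarith

lemma zmod2_cond_iff (n : ℕ) (x y z : Fin n → ZMod 2) :
    (∀ i j, x i * x j + y i * y j + z i * z j = 0) ↔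
      (x = y ∧ z = 0) ∨ (x = z ∧ y = 0) ∨ (y = z ∧ x = 0) := by
  constructor
  · intro h
    have hz : ∀ i, z i = x i + y i := by
      intro i
      have := h i i
      have hs : ∀ a b c : ZMod 2, a * a + b * b + c * c = 0 → c = a + b := by decide
      exact hs _ _ _ this
    have hxy : ∀ i j, x i * y j = y i * x j := by
      intro i j
      have := h i j
      rw [hz i, hz j] at this
      have hs : ∀ a b c d : ZMod 2,
          a * b + c * d + (a + c) * (b + d) = 0 → a * d = c * b := by decide
      exact hs _ _ _ _ this
    by_cases hx : x = 0
    · refine Or.inr (Or.inr ⟨?_, hx⟩)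
      funext i
      have := hz i
      rw [hx] at this
      simpa using this.symm
    · obtain ⟨i₀, hi₀⟩ : ∃ i, x i ≠ 0 := by
        by_contra h'; push_neg at h'; exact hx (funext fun i => h' i)
      have hx1 : x i₀ = 1 := zmod2_ne_zero hi₀
      by_cases hy : y i₀ = 0
      · refine Or.inr (Or.inl ⟨?_, ?_⟩)
        · funext j
          rw [hz j]
          have := hxy i₀ j
          rw [hx1, hy] at this
          simp only [one_mul, zero_mul] at this
          rw [this]; ring
        · funext j
          have := hxy i₀ j
          rw [hx1, hy] at this
          simpa using this
      · have hy1 : y i₀ = 1 := zmod2_ne_zero hy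
        refine Or.inl ⟨?_, ?_⟩
        · funext j
          have := hxy i₀ j
          rw [hx1, hy1] at this
          simpa using this.symm
        · funext j
          rw [hz j]
          have := hxy i₀ j
          rw [hx1, hy1] at this
          simp only [one_mul] at this
          show x j + y j = 0
          rw [← this]
          exact CharTwo.add_self_eq_zero _
  · rintro (⟨h1, h2⟩ | ⟨h1, h2⟩ | ⟨h1, h2⟩) i j <;> subst h1 <;> subst h2 <;>
      simp [CharTwo.add_self_eq_zero]

/-- Third-moment character sum identity for random quadratic forms over `F₂`:
`E_A[(-1)^{xᵀAx + yᵀAy + zᵀAz}] = [x=y][z=0] + [x=z][y=0] + [y=z][x=0] - 2[x=0][y=0][z=0]`. -/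
theorem deg2_third_moment (n : ℕ) (hn : 1 ≤ n) (x y z : Fin n → ZMod 2) :
    (2 ^ (n ^ 2) : ℝ)⁻¹ *
      ∑ A : Matrix (Fin n) (Fin n) (ZMod 2),
        chi (x ⬝ᵥ A.mulVec x + y ⬝ᵥ A.mulVec y + z ⬝ᵥ A.mulVec z)
    = (if x = y then 1 else 0) * (if z = 0 then 1 else 0)
      + (if x = z then 1 else 0) * (if y = 0 then 1 else 0)
      + (if y = z then 1 else 0) * (if x = 0 then 1 else 0)
      - 2 * ((if x = 0 then 1 else 0) * (if y = 0 then 1 else 0)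
          * (if z = 0 then (1 : ℝ) else 0)) := by
  set M : Matrix (Fin n) (Fin n) (ZMod 2) :=
    Matrix.of fun i j => x i * x j + y i * y j + z i * z j with hMdef
  have key : ∀ A : Matrix (Fin n) (Fin n) (ZMod 2),
      x ⬝ᵥ A.mulVec x + y ⬝ᵥ A.mulVec y + z ⬝ᵥ A.mulVec z
        = ∑ i, ∑ j, A i j * M i j := by
    intro A
    simp only [dotProduct, Matrix.mulVec, Finset.mul_sum, hMdef, Matrix.of_apply]
    rw [← Finset.sum_add_distrib, ← Finset.sum_add_distrib]
    refine Finset.sum_congr rfl fun i _ => ?_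
    rw [← Finset.sum_add_distrib, ← Finset.sum_add_distrib]
    exact Finset.sum_congr rfl fun j _ => by ring
  have hsum : (∑ A : Matrix (Fin n) (Fin n) (ZMod 2),
      chi (x ⬝ᵥ A.mulVec x + y ⬝ᵥ A.mulVec y + z ⬝ᵥ A.mulVec z))
      = if M = 0 then (2 : ℝ) ^ (n ^ 2) else 0 := by
    rw [← sum_chi_matrix n M]
    exact Finset.sum_congr rfl fun A _ => by rw [key A]
  rw [hsum]
  have hMiff : M = 0 ↔ (x = y ∧ z = 0) ∨ (x = z ∧ y = 0) ∨ (y = z ∧ x = 0) := by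
    rw [← zmod2_cond_iff n x y z]
    constructor
    · intro h i j
      have : M i j = 0 := by rw [h]; rfl
      simpa [hMdef] using this
    · intro h; ext i j; simpa [hMdef] using h i j
  have h2 : (2 : ℝ) ^ (n ^ 2) ≠ 0 := by positivity
  by_cases hM : M = 0
  · rw [if_pos hM, inv_mul_cancel₀ h2]
    rw [hMiff] at hM
    rcases hM with ⟨h1', h2'⟩ | ⟨h1', h2'⟩ | ⟨h1', h2'⟩
    · by_cases hy : y = 0 <;> simp [h1', h2', hy] <;> norm_num
    · by_cases hz : z = 0 <;> simp [h1', h2', hz] <;> norm_num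
    · by_cases hz : z = 0 <;> simp [h1', h2', hz] <;> norm_num
  · rw [if_neg hM, mul_zero]
    rw [hMiff] at hM
    push_neg at hM
    obtain ⟨hA, hB, hC⟩ := hM
    have t1 : (if x = y then (1:ℝ) else 0) * (if z = 0 then 1 else 0) = 0 := by
      by_cases h : x = y
      · simp [h, hA h]
      · simp [h]
    have t2 : (if x = z then (1:ℝ) else 0) * (if y = 0 then 1 else 0) = 0 := by
      by_cases h : x = z
      · simp [h, hB h]
      · simp [h]
    have t3 : (if y = z then (1:ℝ) else 0) * (if x = 0 then 1 else 0) = 0 := by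
      by_cases h : y = z
      · simp [h, hC h]
      · simp [h]
    have t0 : (if x = 0 then (1:ℝ) else 0) * (if y = 0 then 1 else 0)
        * (if z = 0 then 1 else 0) = 0 := by
      by_cases hx : x = 0
      · by_cases hy : y = 0
        · have : x = y := hx.trans hy.symm
          simp [hx, hy, hA this]
        · simp [hy]
      · simp [hx]
    rw [t1, t2, t3, t0]
    ring
end

section
/- Let n ≥ 1. For an n×n matrix A over F₂, let φ_A ∈ ℂ^{F₂ⁿ} be the phase state, φ_A(x) = 2^{−n/2}(−1)^{xᵀAx}. Then the uniform average over all A ∈ F₂^{n×n} of the twofold Kronecker product of the rank-one projector φ_A φ_A† with itself satisfies E_A[(φ_A φ_A†) ⊗ (φ_A φ_A†)] = 4^{−n}(I + SWAP) + 2^{−n} Φ⁺(Φ⁺)† − 2·4^{−n} Σ_{x ∈ F₂ⁿ} E_{(x,x),(x,x)}, as matrices on ℂ^{F₂ⁿ × F₂ⁿ}, where SWAP is the matrix with entries SWAP((a,b),(c,d)) = [a=d][b=c], Φ⁺ = 2^{−n/2} Σ_{x} e_{(x,x)} is the EPR state on 2n qubits, and E_{(x,x),(x,x)} is the matrix unit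 with a single 1 in entry ((x,x),(x,x)). -/
open Matrix Kronecker

/-- The quadratic phase state `φ_A(x) = 2^{-n/2} (-1)^{xᵀAx}` as a vector in `ℂ^{F₂ⁿ}`. -/
noncomputable def phaseState (n : ℕ) (A : Matrix (Fin n) (Fin n) (ZMod 2)) :
    (Fin n → ZMod 2) → ℂ :=
  fun x => (Real.sqrt (2 ^ n) : ℂ)⁻¹ * (if x ⬝ᵥ A.mulVec x = 0 then 1 else -1)

/-- The rank-one projector `φ_A φ_A†`. -/
noncomputable def phaseProj (n : ℕ) (A : Matrix (Fin n) (Fin n) (ZMod 2)) :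
    Matrix (Fin n → ZMod 2) (Fin n → ZMod 2) ℂ :=
  Matrix.vecMulVec (phaseState n A) (star (phaseState n A))

/-- The swap operator on two `n`-qubit registers. -/
def swapOp (n : ℕ) :
    Matrix ((Fin n → ZMod 2) × (Fin n → ZMod 2)) ((Fin n → ZMod 2) × (Fin n → ZMod 2)) ℂ :=
  Matrix.of fun p q => if p.1 = q.2 ∧ p.2 = q.1 then 1 else 0

/-- The EPR state `Φ⁺ = 2^{-n/2} Σ_x e_{(x,x)}` on `2n` qubits. -/
noncomputable def eprState (n : ℕ) : (Fin n → ZMod 2) × (Fin n → ZMod 2) → ℂ :=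
  fun p => if p.1 = p.2 then (Real.sqrt (2 ^ n) : ℂ)⁻¹ else 0

/-! ### Auxiliary lemmas -/

/-- The sign character `χ(t) = (-1)^t` on `F₂`. -/
noncomputable def phaseChi : ZMod 2 → ℂ := fun t => if t = 0 then 1 else -1

lemma phaseChi_zmod2_cases : ∀ s : ZMod 2, s = 0 ∨ s = 1 := by decide

lemma phaseChi_zmod2_sum (f : ZMod 2 → ℂ) : ∑ x : ZMod 2, f x = f 0 + f 1 := by
  rw [show (Finset.univ : Finset (ZMod 2)) = {0, 1} from rfl]
  rw [Finset.sum_insert (by decide), Finset.sum_singleton]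

lemma phaseChi_add (s t : ZMod 2) : phaseChi (s + t) = phaseChi s * phaseChi t := by
  have e : (1 : ZMod 2) + 1 = 0 := by decide
  have o : (1 : ZMod 2) ≠ 0 := by decide
  rcases phaseChi_zmod2_cases s with h | h <;> rcases phaseChi_zmod2_cases t with h' | h' <;>
    subst h <;> subst h' <;> simp [phaseChi, e, o]

lemma phaseChi_sum {ι : Type*} (s : Finset ι) (f : ι → ZMod 2) :
    phaseChi (∑ i ∈ s, f i) = ∏ i ∈ s, phaseChi (f i) := by
  classical
  induction s using Finset.induction with
  | empty => simp [phaseChi]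
  | insert _ _ h ih => rw [Finset.sum_insert h, Finset.prod_insert h, phaseChi_add, ih]

lemma sum_phaseChi_linear {ι : Type*} [Fintype ι] [DecidableEq ι] (T : ι → ZMod 2) :
    ∑ A : ι → ZMod 2, phaseChi (∑ i, A i * T i)
      = if ∀ i, T i = 0 then (2 : ℂ) ^ Fintype.card ι else 0 := by
  classical
  simp_rw [fun A : ι → ZMod 2 => phaseChi_sum Finset.univ (fun i => A i * T i)]
  have key := (Finset.prod_univ_sum (t := fun _ : ι => (Finset.univ : Finset (ZMod 2)))
    (f := fun i t => phaseChi (t * T i))).symm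
  rw [← Fintype.piFinset_univ, key]
  have h2 : ∀ i, (∑ t : ZMod 2, phaseChi (t * T i)) = if T i = 0 then 2 else 0 := by
    intro i
    rcases phaseChi_zmod2_cases (T i) with h | h <;> rw [h] <;>
      · rw [phaseChi_zmod2_sum]
        norm_num [phaseChi, show (1 : ZMod 2) ≠ 0 by decide]
  simp_rw [h2]
  by_cases h : ∀ i, T i = 0
  · simp [h, Finset.card_univ]
  · push_neg at h
    obtain ⟨i, hi⟩ := h
    rw [if_neg (by push_neg; exact ⟨i, hi⟩)]
    exact Finset.prod_eq_zero (Finset.mem_univ i) (by simp [hi])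

lemma phase_relKey : ∀ u v w : ZMod 2 × ZMod 2 × ZMod 2,
    (u.1 * v.1 + u.2.1 * v.2.1 + u.2.2 * v.2.2 +
      (u.1 + u.2.1 + u.2.2) * (v.1 + v.2.1 + v.2.2) = 0 ∧
    u.1 * w.1 + u.2.1 * w.2.1 + u.2.2 * w.2.2 +
      (u.1 + u.2.1 + u.2.2) * (w.1 + w.2.1 + w.2.2) = 0 ∧
    v.1 * w.1 + v.2.1 * w.2.1 + v.2.2 * w.2.2 +
      (v.1 + v.2.1 + v.2.2) * (w.1 + w.2.1 + w.2.2) = 0) →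
    u.1 = u.2.1 ∨ v.1 = v.2.2 ∨ w.2.1 = w.2.2 := by
  decide

lemma phase_pairing {n : ℕ} (a b c d : Fin n → ZMod 2)
    (h : ∀ i j, a i * a j + b i * b j + c i * c j + d i * d j = 0) :
    (a = c ∧ b = d) ∨ (a = d ∧ b = c) ∨ (a = b ∧ c = d) := by
  have hd : ∀ i, d i = a i + b i + c i := by
    intro i
    have := h i i
    revert this
    generalize a i = x; generalize b i = y; generalize c i = z; generalize d i = w
    revert x y z w; decide
  have hrel : ∀ i j,
      a i * a j + b i * b j + c i * c j +
        (a i + b i + c i) * (a j + b j + c j) = 0 := by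
    intro i j
    have := h i j
    rw [hd i, hd j] at this
    exact this
  by_cases hab : a = b
  · subst hab
    refine Or.inr (Or.inr ⟨rfl, ?_⟩)
    funext i
    rw [hd i]
    generalize a i = x; generalize c i = z
    revert x z; decide
  by_cases hac : a = c
  · subst hac
    refine Or.inl ⟨rfl, ?_⟩
    funext i
    rw [hd i]
    generalize a i = x; generalize b i = y
    revert x y; decide
  by_cases hbc : b = c
  · subst hbc
    refine Or.inr (Or.inl ⟨?_, rfl⟩)
    funext i
    rw [hd i]
    generalize a i = x; generalize b i = y
    revert x y; decide
  exfalso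
  have hab' : ∃ i, a i ≠ b i := by
    by_contra hcon; push_neg at hcon; exact hab (funext hcon)
  have hac' : ∃ i, a i ≠ c i := by
    by_contra hcon; push_neg at hcon; exact hac (funext hcon)
  have hbc' : ∃ i, b i ≠ c i := by
    by_contra hcon; push_neg at hcon; exact hbc (funext hcon)
  obtain ⟨i, hi⟩ := hab'
  obtain ⟨j, hj⟩ := hac'
  obtain ⟨k, hk⟩ := hbc'
  rcases phase_relKey (a i, b i, c i) (a j, b j, c j) (a k, b k, c k)
      ⟨hrel i j, hrel i k, hrel j k⟩ with h1 | h1 | h1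
  · exact hi h1
  · exact hj h1
  · exact hk h1

lemma phase_pairing_iff {n : ℕ} (a b c d : Fin n → ZMod 2) :
    (∀ p : Fin n × Fin n,
        a p.1 * a p.2 + b p.1 * b p.2 + c p.1 * c p.2 + d p.1 * d p.2 = 0)
      ↔ ((a = c ∧ b = d) ∨ (a = d ∧ b = c) ∨ (a = b ∧ c = d)) := by
  constructor
  · intro h
    exact phase_pairing a b c d (fun i j => h (i, j))
  · rintro (⟨rfl, rfl⟩ | ⟨rfl, rfl⟩ | ⟨rfl, rfl⟩) ⟨i, j⟩
    · generalize a i * a j = x; generalize b i * b j = y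
      revert x y; decide
    · generalize a i * a j = x; generalize b i * b j = y
      revert x y; decide
    · generalize a i * a j = x; generalize c i * c j = y
      revert x y; decide

lemma phase_star_chi (t : ZMod 2) : star (phaseChi t) = phaseChi t := by
  unfold phaseChi; split <;> simp

lemma phaseState_star (n : ℕ) (A : Matrix (Fin n) (Fin n) (ZMod 2)) (x : Fin n → ZMod 2) :
    star (phaseState n A x) = phaseState n A x := by
  have h : phaseState n A x
      = (Real.sqrt (2 ^ n) : ℂ)⁻¹ * phaseChi (x ⬝ᵥ A.mulVec x) := rfl
  rw [h, star_mul', phase_star_chi]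
  congr 1
  rw [star_inv₀]
  congr 1
  exact Complex.conj_ofReal _

lemma phase_K_sq (n : ℕ) :
    ((Real.sqrt (2 ^ n) : ℂ)⁻¹) * ((Real.sqrt (2 ^ n) : ℂ)⁻¹) = ((2 : ℂ) ^ n)⁻¹ := by
  rw [← mul_inv]
  congr 1
  rw [← Complex.ofReal_mul, Real.mul_self_sqrt (by positivity)]
  push_cast; ring

lemma phase_four_pow (n : ℕ) : (4 : ℂ) ^ n = (2 : ℂ) ^ n * (2 : ℂ) ^ n := by
  rw [show (4 : ℂ) = 2 * 2 by norm_num, mul_pow]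

lemma phase_lhs_entry (n : ℕ) (a b c d : Fin n → ZMod 2)
    (A : Matrix (Fin n) (Fin n) (ZMod 2)) :
    (phaseProj n A ⊗ₖ phaseProj n A) (a, b) (c, d)
      = ((4 : ℂ) ^ n)⁻¹ *
        phaseChi (a ⬝ᵥ A.mulVec a + b ⬝ᵥ A.mulVec b + (c ⬝ᵥ A.mulVec c + d ⬝ᵥ A.mulVec d)) := by
  rw [kroneckerMap_apply]
  unfold phaseProj
  rw [vecMulVec_apply, vecMulVec_apply]
  simp only [Pi.star_apply, phaseState_star]
  have he : ∀ x : Fin n → ZMod 2, phaseState n A x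
      = (Real.sqrt (2 ^ n) : ℂ)⁻¹ * phaseChi (x ⬝ᵥ A.mulVec x) := fun _ => rfl
  rw [he, he, he, he, phaseChi_add, phaseChi_add, phaseChi_add]
  rw [phase_four_pow, mul_inv, ← phase_K_sq]
  ring

lemma phase_bilinear (n : ℕ) (a b c d : Fin n → ZMod 2)
    (A : Matrix (Fin n) (Fin n) (ZMod 2)) :
    a ⬝ᵥ A.mulVec a + b ⬝ᵥ A.mulVec b + (c ⬝ᵥ A.mulVec c + d ⬝ᵥ A.mulVec d)
      = ∑ p : Fin n × Fin n, A p.1 p.2 *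
          (a p.1 * a p.2 + b p.1 * b p.2 + c p.1 * c p.2 + d p.1 * d p.2) := by
  simp only [dotProduct, mulVec, Finset.mul_sum, Fintype.sum_prod_type]
  rw [← Finset.sum_add_distrib, ← Finset.sum_add_distrib, ← Finset.sum_add_distrib]
  refine Finset.sum_congr rfl fun i _ => ?_
  rw [← Finset.sum_add_distrib, ← Finset.sum_add_distrib, ← Finset.sum_add_distrib]
  refine Finset.sum_congr rfl fun j _ => ?_
  ring

lemma phase_rhs_entry (n : ℕ) (a b c d : Fin n → ZMod 2) :
    (((4 : ℂ) ^ n)⁻¹ • (1 + swapOp n)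
        + ((2 : ℂ) ^ n)⁻¹ • Matrix.vecMulVec (eprState n) (star (eprState n))
        - (2 * ((4 : ℂ) ^ n)⁻¹) •
            ∑ x : Fin n → ZMod 2, Matrix.single (x, x) (x, x) (1 : ℂ)) (a, b) (c, d)
    = ((4 : ℂ) ^ n)⁻¹ * (((if a = c ∧ b = d then 1 else 0) + (if a = d ∧ b = c then 1 else 0))
        + (if a = b ∧ c = d then 1 else 0)
        - 2 * (if a = b ∧ a = c ∧ a = d then 1 else 0)) := by
  classical
  simp only [Matrix.sub_apply, Matrix.add_apply, Matrix.smul_apply, Matrix.one_apply,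
    swapOp, Matrix.of_apply, Matrix.vecMulVec_apply, Matrix.sum_apply, eprState,
    Pi.star_apply, smul_eq_mul, Matrix.single, Prod.mk.injEq]
  have hstep : ∀ x : Fin n → ZMod 2,
      ((if (x = a ∧ x = b) ∧ x = c ∧ x = d then (1 : ℂ) else 0))
      = if x = a then (if a = b ∧ a = c ∧ a = d then (1 : ℂ) else 0) else 0 := by
    intro x
    by_cases hx : x = a
    · subst hx; simp only [true_and, if_true]
    · simp [hx]
  simp_rw [hstep, Finset.sum_ite_eq' Finset.univ a, Finset.mem_univ, if_true]
  have hmid : ((2 : ℂ) ^ n)⁻¹ *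
      ((if a = b then ((Real.sqrt (2 ^ n) : ℂ))⁻¹ else 0) *
        star (if c = d then ((Real.sqrt (2 ^ n) : ℂ))⁻¹ else 0))
      = ((4 : ℂ) ^ n)⁻¹ * (if a = b ∧ c = d then 1 else 0) := by
    by_cases h1 : a = b <;> by_cases h2 : c = d <;>
      simp [h1, h2, Complex.star_def, phase_four_pow n, ← phase_K_sq n, mul_comm, mul_assoc]
  rw [hmid]
  ring

lemma phase_indicator (n : ℕ) (a b c d : Fin n → ZMod 2) :
    (if (a = c ∧ b = d) ∨ (a = d ∧ b = c) ∨ (a = b ∧ c = d) then (1 : ℂ) else 0)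
      = ((if a = c ∧ b = d then 1 else 0) + (if a = d ∧ b = c then 1 else 0))
        + (if a = b ∧ c = d then 1 else 0)
        - 2 * (if a = b ∧ a = c ∧ a = d then 1 else 0) := by
  classical
  by_cases h4 : a = b ∧ a = c ∧ a = d
  · obtain ⟨rfl, rfl, rfl⟩ := h4
    norm_num
  · by_cases h1 : a = c ∧ b = d
    · obtain ⟨rfl, rfl⟩ := h1
      have hab : ¬ a = b := fun h => h4 ⟨h, rfl, h⟩
      simp [hab]
    · by_cases h2 : a = d ∧ b = c
      · obtain ⟨rfl, rfl⟩ := h2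
        have hab : ¬ a = b := fun h => h1 ⟨h, h.symm⟩
        simp [hab]
      · by_cases h3 : a = b ∧ c = d
        · obtain ⟨rfl, rfl⟩ := h3
          have hac : ¬ a = c := fun h => h1 ⟨h, h⟩
          simp [hac, h1, h2]
        · simp [h1, h2, h3, h4]

/-- Fourth moment of random quadratic phase states:
`E_A[(φ_A φ_A†) ⊗ (φ_A φ_A†)] = 4^{-n}(I + SWAP) + 2^{-n} Φ⁺Φ⁺† - 2·4^{-n} Σ_x E_{(x,x),(x,x)}`. -/
theorem phaseState_fourth_moment (n : ℕ) (hn : 1 ≤ n) :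
    (2 ^ (n ^ 2) : ℂ)⁻¹ •
        ∑ A : Matrix (Fin n) (Fin n) (ZMod 2), (phaseProj n A ⊗ₖ phaseProj n A)
      = ((4 : ℂ) ^ n)⁻¹ • (1 + swapOp n)
        + ((2 : ℂ) ^ n)⁻¹ • Matrix.vecMulVec (eprState n) (star (eprState n))
        - (2 * ((4 : ℂ) ^ n)⁻¹) •
            ∑ x : Fin n → ZMod 2, Matrix.single (x, x) (x, x) (1 : ℂ) := by
  classical
  ext ⟨a, b⟩ ⟨c, d⟩
  rw [Matrix.smul_apply, Matrix.sum_apply, phase_rhs_entry]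
  simp_rw [phase_lhs_entry, phase_bilinear]
  rw [← Finset.mul_sum]
  have hsum : ∑ A : Matrix (Fin n) (Fin n) (ZMod 2),
      phaseChi (∑ p : Fin n × Fin n, A p.1 p.2 *
        (a p.1 * a p.2 + b p.1 * b p.2 + c p.1 * c p.2 + d p.1 * d p.2))
      = ∑ f : Fin n × Fin n → ZMod 2, phaseChi (∑ p, f p *
        (a p.1 * a p.2 + b p.1 * b p.2 + c p.1 * c p.2 + d p.1 * d p.2)) :=
    Fintype.sum_equiv (Equiv.curry (Fin n) (Fin n) (ZMod 2)).symm _ _ (fun f => rfl)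
  rw [hsum, sum_phaseChi_linear]
  rw [Fintype.card_prod, Fintype.card_fin, ← pow_two]
  rw [if_congr (phase_pairing_iff a b c d) rfl rfl]
  rw [← phase_indicator n a b c d]
  have h2 : ((2 : ℂ) ^ (n ^ 2))⁻¹ * (2 : ℂ) ^ (n ^ 2) = 1 :=
    inv_mul_cancel₀ (pow_ne_zero _ two_ne_zero)
  by_cases hp : (a = c ∧ b = d) ∨ (a = d ∧ b = c) ∨ (a = b ∧ c = d)
  · rw [if_pos hp, if_pos hp, smul_eq_mul, mul_one,
      mul_comm ((4 : ℂ) ^ n)⁻¹, ← mul_assoc, h2, one_mul]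
  · simp [if_neg hp]
end

section
/- Let n ≥ 1 and let M be a Hermitian matrix on ℂ^{F₂ⁿ} with operator norm ‖M‖ ≤ 1. With φ_A the phase state of the quadratic function f_A, one has E_A[(tr(M φ_A φ_A†))²] ≤ (tr M)²/4ⁿ + 2·2^{−n}; consequently, since E_A[tr(M φ_A φ_A†)] = tr(M)/2ⁿ, the variance satisfies E_A[(tr(M φ_A φ_A†))²] − (tr(M)/2ⁿ)² ≤ 2·2^{−n}. -/
open Matrix Finset


lemma zmod2_ne (b : ZMod 2) (h : b ≠ 0) : b = 1 := by revert h; revert b; decide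

lemma card_mat (n : ℕ) : Fintype.card (Matrix (Fin n) (Fin n) (ZMod 2)) = 2^(n^2) := by
  have : Fintype.card (Matrix (Fin n) (Fin n) (ZMod 2))
      = Fintype.card (Fin n → Fin n → ZMod 2) := rfl
  rw [this]; simp [Fintype.card_fun]; ring

lemma char_sum (n : ℕ) (B : Matrix (Fin n) (Fin n) (ZMod 2)) :
    ∑ A : Matrix (Fin n) (Fin n) (ZMod 2),
      (if (∑ i, ∑ j, A i j * B i j) = 0 then (1:ℝ) else -1)
    = if B = 0 then 2^(n^2) else 0 := by
  by_cases hB : B = 0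
  · simp [hB, card_mat n]
  · simp only [hB, if_false]
    obtain ⟨i0, j0, hij⟩ : ∃ i j, B i j ≠ 0 := by
      by_contra h; push_neg at h; exact hB (by ext i j; exact h i j)
    have hij1 : B i0 j0 = 1 := zmod2_ne _ hij
    set E : Matrix (Fin n) (Fin n) (ZMod 2) := Matrix.single i0 j0 1 with hE
    have hEB : (∑ i, ∑ j, E i j * B i j) = 1 := by
      rw [hE]
      simp [Matrix.single, ite_and, Finset.sum_ite_eq, hij1]
    have hEsum : ∀ A : Matrix (Fin n) (Fin n) (ZMod 2),
        (∑ i, ∑ j, (A + E) i j * B i j) = (∑ i, ∑ j, A i j * B i j) + 1 := by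
      intro A
      have : ∀ i j, (A + E) i j * B i j = A i j * B i j + E i j * B i j := by
        intro i j; simp [add_mul]
      simp only [this, Finset.sum_add_distrib]
      rw [hEB]
    apply Finset.sum_involution (fun A _ => A + E)
    · intro A _
      rw [hEsum A]
      by_cases h : (∑ i, ∑ j, A i j * B i j) = 0
      · simp [h]
      · have h1 : (∑ i, ∑ j, A i j * B i j) = 1 := zmod2_ne _ h
        simp [h, h1, show (1:ZMod 2)+1 = 0 from rfl]
    · intro A _ _ h
      have hE0 : E i0 j0 = 0 := by
        have h2 : E = 0 := by have := congrArg (· - A) h; simpa using this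
        rw [h2]; rfl
      simp [hE, Matrix.single] at hE0
    · intro A _; exact Finset.mem_univ _
    · intro A _
      ext i j
      simp only [Matrix.add_apply]
      have h2 : E i j + E i j = 0 := by generalize E i j = e; revert e; decide
      rw [add_assoc, h2, add_zero]

noncomputable def eps (n : ℕ) (A : Matrix (Fin n) (Fin n) (ZMod 2))
    (x : Fin n → ZMod 2) : ℝ := if x ⬝ᵥ A.mulVec x = 0 then 1 else -1

lemma quad_eq (n : ℕ) (A : Matrix (Fin n) (Fin n) (ZMod 2)) (x : Fin n → ZMod 2) :
    x ⬝ᵥ A.mulVec x = ∑ i, ∑ j, A i j * (x i * x j) := by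
  simp only [dotProduct, Matrix.mulVec, Finset.mul_sum]
  exact Finset.sum_congr rfl fun i _ => Finset.sum_congr rfl fun j _ => by ring

lemma ite2 (a b : ZMod 2) :
    (if a = 0 then (1:ℝ) else -1) * (if b = 0 then (1:ℝ) else -1)
      = if a + b = 0 then (1:ℝ) else -1 := by
  have h01 : ∀ c : ZMod 2, c = 0 ∨ c = 1 := by decide
  rcases h01 a with rfl | rfl <;> rcases h01 b with rfl | rfl <;> simp [show (1:ZMod 2) + 1 = 0 from rfl]

lemma eps_mul (n : ℕ) (A : Matrix (Fin n) (Fin n) (ZMod 2)) (x y : Fin n → ZMod 2) :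
    eps n A x * eps n A y
      = if (∑ i, ∑ j, A i j * (x i * x j + y i * y j)) = 0 then (1:ℝ) else -1 := by
  unfold eps
  rw [ite2]
  have h : x ⬝ᵥ A.mulVec x + y ⬝ᵥ A.mulVec y
      = ∑ i, ∑ j, A i j * (x i * x j + y i * y j) := by
    rw [quad_eq, quad_eq, ← Finset.sum_add_distrib]
    exact Finset.sum_congr rfl fun i _ => by
      rw [← Finset.sum_add_distrib]
      exact Finset.sum_congr rfl fun j _ => by ring
  rw [h]

lemma eps_mul4 (n : ℕ) (A : Matrix (Fin n) (Fin n) (ZMod 2)) (x y z w : Fin n → ZMod 2) :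
    eps n A x * eps n A y * (eps n A z * eps n A w)
      = if (∑ i, ∑ j, A i j * (x i * x j + y i * y j + z i * z j + w i * w j)) = 0
        then (1:ℝ) else -1 := by
  rw [eps_mul, eps_mul, ite2]
  have h : (∑ i, ∑ j, A i j * (x i * x j + y i * y j))
      + (∑ i, ∑ j, A i j * (z i * z j + w i * w j))
      = ∑ i, ∑ j, A i j * (x i * x j + y i * y j + z i * z j + w i * w j) := by
    rw [← Finset.sum_add_distrib]
    exact Finset.sum_congr rfl fun i _ => by
      rw [← Finset.sum_add_distrib]
      exact Finset.sum_congr rfl fun j _ => by ring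
  rw [h]

lemma two_char {n : ℕ} (x y : Fin n → ZMod 2) :
    (∀ i j, x i * x j + y i * y j = 0) ↔ x = y := by
  constructor
  · intro h
    funext i
    have := h i i
    revert this
    generalize x i = a; generalize y i = b
    revert a b; decide
  · intro h; subst h; intro i j
    generalize x i * x j = p; revert p; decide

lemma pt_lemma : ∀ xk yk zk wk xj yj zj wj : ZMod 2,
    xk + yk + zk + wk = 0 → xj + yj + zj + wj = 0 →
    xk * xj + yk * yj + zk * zj + wk * wj = 0 → xk + yk = 1 →
    ((zk = xk → zj = xj ∧ wj = yj) ∧ (zk = yk → zj = yj ∧ wj = xj)) := by decide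

lemma four_char {n : ℕ} (x y z w : Fin n → ZMod 2) :
    (∀ i j, x i * x j + y i * y j + z i * z j + w i * w j = 0) ↔
    ((x = y ∧ z = w) ∨ (x = z ∧ y = w) ∨ (x = w ∧ y = z)) := by
  constructor
  · intro h
    have hdiag : ∀ i, x i + y i + z i + w i = 0 := by
      intro i
      have := h i i
      revert this
      generalize x i = a; generalize y i = b; generalize z i = c; generalize w i = d
      revert a b c d; decide
    by_cases hxy : x = y
    · left
      refine ⟨hxy, funext fun i => ?_⟩
      have h1 := h i i
      rw [hxy] at h1
      revert h1
      generalize y i = a; generalize z i = c; generalize w i = d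
      revert a c d; decide
    · obtain ⟨k, hk⟩ := Function.ne_iff.mp hxy
      have hk1 : x k + y k = 1 := by
        revert hk; generalize x k = a; generalize y k = b; revert a b; decide
      by_cases hz : z k = x k
      · right; left
        constructor <;> funext j
        · exact (((pt_lemma _ _ _ _ _ _ _ _ (hdiag k) (hdiag j) (h k j) hk1).1 hz).1).symm
        · exact (((pt_lemma _ _ _ _ _ _ _ _ (hdiag k) (hdiag j) (h k j) hk1).1 hz).2).symm
      · have hz' : z k = y k := by
          revert hk hz; generalize x k = a; generalize y k = b; generalize z k = c
          revert a b c; decide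
        right; right
        constructor <;> funext j
        · exact (((pt_lemma _ _ _ _ _ _ _ _ (hdiag k) (hdiag j) (h k j) hk1).2 hz').2).symm
        · exact (((pt_lemma _ _ _ _ _ _ _ _ (hdiag k) (hdiag j) (h k j) hk1).2 hz').1).symm
  · have zsum : ∀ p q : ZMod 2, (p+p+q+q = 0) ∧ (p+q+p+q = 0) ∧ (p+q+q+p = 0) := by decide
    rintro (⟨h1, h2⟩ | ⟨h1, h2⟩ | ⟨h1, h2⟩) i j <;> subst h1 <;> subst h2
    · exact (zsum _ _).1
    · exact (zsum _ _).2.1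
    · exact (zsum _ _).2.2

lemma phaseState_eq (n : ℕ) (A : Matrix (Fin n) (Fin n) (ZMod 2)) (x : Fin n → ZMod 2) :
    phaseState n A x = Complex.ofReal ((Real.sqrt (2 ^ n))⁻¹ * eps n A x) := by
  unfold phaseState eps
  by_cases h : x ⬝ᵥ A.mulVec x = 0 <;> simp [h]

lemma phaseProj_eq (n : ℕ) (A : Matrix (Fin n) (Fin n) (ZMod 2)) (x y : Fin n → ZMod 2) :
    phaseProj n A y x = Complex.ofReal ((2 ^ n : ℝ)⁻¹ * (eps n A x * eps n A y)) := by
  have hc : (Real.sqrt (2 ^ n))⁻¹ * (Real.sqrt (2 ^ n))⁻¹ = (2 ^ n : ℝ)⁻¹ := by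
    rw [← mul_inv, Real.mul_self_sqrt (by positivity)]
  unfold phaseProj
  rw [Matrix.vecMulVec_apply, Pi.star_apply, phaseState_eq, phaseState_eq]
  rw [Complex.star_def, Complex.conj_ofReal, ← Complex.ofReal_mul]
  congr 1
  rw [← hc]; ring

lemma trace_re_eq (n : ℕ) (A : Matrix (Fin n) (Fin n) (ZMod 2))
    (M : Matrix (Fin n → ZMod 2) (Fin n → ZMod 2) ℂ) :
    ((M * phaseProj n A).trace).re
      = (2 ^ n : ℝ)⁻¹ * ∑ x, ∑ y, (M x y).re * (eps n A x * eps n A y) := by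
  rw [Matrix.trace]
  simp only [Matrix.diag_apply, Matrix.mul_apply, phaseProj_eq]
  rw [Complex.re_sum]
  rw [Finset.mul_sum]
  refine Finset.sum_congr rfl fun x _ => ?_
  rw [Complex.re_sum, Finset.mul_sum]
  refine Finset.sum_congr rfl fun y _ => ?_
  rw [mul_comm (M x y), Complex.re_ofReal_mul]
  ring

lemma sum_eps_two (n : ℕ) (x y : Fin n → ZMod 2) :
    ∑ A : Matrix (Fin n) (Fin n) (ZMod 2), eps n A x * eps n A y
      = if x = y then (2:ℝ)^(n^2) else 0 := by
  have h1 : (∑ A : Matrix (Fin n) (Fin n) (ZMod 2), eps n A x * eps n A y)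
      = ∑ A : Matrix (Fin n) (Fin n) (ZMod 2),
          (if (∑ i, ∑ j, A i j * (Matrix.of fun i j => x i * x j + y i * y j) i j) = 0
            then (1:ℝ) else -1) := by
    simp only [eps_mul]; rfl
  rw [h1, char_sum]
  have hB : ((Matrix.of fun i j => x i * x j + y i * y j) = (0 : Matrix (Fin n) (Fin n) (ZMod 2)))
      ↔ x = y := by
    rw [← two_char x y]
    constructor
    · intro h i j; exact congrFun (congrFun h i) j
    · intro h; ext i j; exact h i j
  by_cases hxy : x = y
  · rw [if_pos (hB.mpr hxy), if_pos hxy]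
  · rw [if_neg (fun h => hxy (hB.mp h)), if_neg hxy]

lemma sum_eps_four (n : ℕ) (x y z w : Fin n → ZMod 2) :
    ∑ A : Matrix (Fin n) (Fin n) (ZMod 2), eps n A x * eps n A y * (eps n A z * eps n A w)
      = if ((x = y ∧ z = w) ∨ (x = z ∧ y = w) ∨ (x = w ∧ y = z)) then (2:ℝ)^(n^2) else 0 := by
  have h1 : (∑ A : Matrix (Fin n) (Fin n) (ZMod 2), eps n A x * eps n A y * (eps n A z * eps n A w))
      = ∑ A : Matrix (Fin n) (Fin n) (ZMod 2),
          (if (∑ i, ∑ j, A i j *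
              (Matrix.of fun i j => x i * x j + y i * y j + z i * z j + w i * w j) i j) = 0
            then (1:ℝ) else -1) := by
    simp only [eps_mul4]; rfl
  rw [h1, char_sum]
  have hB : ((Matrix.of fun i j => x i * x j + y i * y j + z i * z j + w i * w j)
        = (0 : Matrix (Fin n) (Fin n) (ZMod 2)))
      ↔ ((x = y ∧ z = w) ∨ (x = z ∧ y = w) ∨ (x = w ∧ y = z)) := by
    rw [← four_char x y z w]
    constructor
    · intro h i j; exact congrFun (congrFun h i) j
    · intro h; ext i j; exact h i j
  by_cases hc : (x = y ∧ z = w) ∨ (x = z ∧ y = w) ∨ (x = w ∧ y = z)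
  · rw [if_pos (hB.mpr hc), if_pos hc]
  · rw [if_neg (fun h => hc (hB.mp h)), if_neg hc]

lemma frob_bound (n : ℕ) (M : Matrix (Fin n → ZMod 2) (Fin n → ZMod 2) ℂ)
    (hMnorm : ∀ v : EuclideanSpace ℂ (Fin n → ZMod 2),
      ‖Matrix.toEuclideanLin M v‖ ≤ ‖v‖) :
    ∑ x : Fin n → ZMod 2, ∑ y : Fin n → ZMod 2, (M x y).re ^ 2 ≤ 2 ^ n := by
  have col : ∀ y : Fin n → ZMod 2, ∑ x : Fin n → ZMod 2, ‖M x y‖ ^ 2 ≤ 1 := by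
    intro y
    set v : EuclideanSpace ℂ (Fin n → ZMod 2) := EuclideanSpace.single y 1 with hv
    have hvn : ‖v‖ = 1 := by simp [hv, EuclideanSpace.norm_single]
    have happ : ∀ x, (Matrix.toEuclideanLin M v : EuclideanSpace ℂ (Fin n → ZMod 2)) x = M x y := by
      intro x
      rw [Matrix.toEuclideanLin_apply]
      show (M.mulVec ((WithLp.equiv 2 _) v)) x = M x y
      have : (WithLp.equiv 2 ((Fin n → ZMod 2) → ℂ)) v = fun z => if z = y then 1 else 0 := by
        funext z
        simp [hv, EuclideanSpace.single_apply]
      rw [this]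
      simp [Matrix.mulVec, dotProduct]
    have hle := hMnorm v
    rw [hvn] at hle
    have h2 : ‖Matrix.toEuclideanLin M v‖ ^ 2 ≤ 1 := by
      nlinarith [norm_nonneg (Matrix.toEuclideanLin M v)]
    rw [EuclideanSpace.norm_eq] at h2
    rw [Real.sq_sqrt (by positivity)] at h2
    calc ∑ x : Fin n → ZMod 2, ‖M x y‖ ^ 2
        = ∑ x : Fin n → ZMod 2, ‖(Matrix.toEuclideanLin M v : EuclideanSpace ℂ (Fin n → ZMod 2)) x‖ ^ 2 := by
          refine Finset.sum_congr rfl fun x _ => by rw [happ]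
      _ ≤ 1 := h2
  calc ∑ x : Fin n → ZMod 2, ∑ y : Fin n → ZMod 2, (M x y).re ^ 2
      ≤ ∑ x : Fin n → ZMod 2, ∑ y : Fin n → ZMod 2, ‖M x y‖ ^ 2 := by
        refine Finset.sum_le_sum fun x _ => Finset.sum_le_sum fun y _ => ?_
        have h := Complex.abs_re_le_norm (M x y)
        nlinarith [abs_nonneg (M x y).re, sq_abs (M x y).re]
    _ = ∑ y : Fin n → ZMod 2, ∑ x : Fin n → ZMod 2, ‖M x y‖ ^ 2 := Finset.sum_comm
    _ ≤ ∑ y : Fin n → ZMod 2, 1 := Finset.sum_le_sum fun y _ => col y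
    _ = 2 ^ n := by simp [Fintype.card_fun]


lemma ite_incl_excl {α : Type*} [DecidableEq α] (x y z w : α) (v : ℝ) :
    (if ((x = y ∧ z = w) ∨ (x = z ∧ y = w) ∨ (x = w ∧ y = z)) then v else 0)
      = (if x = y ∧ z = w then v else 0) + (if x = z ∧ y = w then v else 0)
        + (if x = w ∧ y = z then v else 0) - 2 * (if x = y ∧ x = z ∧ x = w then v else 0) := by
  by_cases h1 : x = y ∧ z = w
  · obtain ⟨h1a, h1b⟩ := h1
    subst h1a; subst h1b
    by_cases h : x = z
    · subst h; simp; ring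
    · simp [h, Ne.symm h]
  · by_cases h2 : x = z ∧ y = w
    · obtain ⟨h2a, h2b⟩ := h2
      subst h2a; subst h2b
      have hxy : ¬ x = y := fun h => h1 ⟨h, h⟩
      simp [hxy, h1]
    · by_cases h3 : x = w ∧ y = z
      · obtain ⟨h3a, h3b⟩ := h3
        subst h3a; subst h3b
        have hxy : ¬ x = y := fun h => h2 ⟨h, h.symm⟩
        simp [hxy, h1, h2]
      · have hd : ¬(x = y ∧ x = z ∧ x = w) := by
          rintro ⟨ha, hb, hc⟩
          exact h2 ⟨hb, by rw [← ha, hc]⟩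
        simp [h1, h2, h3, hd]

lemma quad_sum {α : Type*} [Fintype α] [DecidableEq α] (f : α → α → ℝ) (c : ℝ) :
    (∑ x, ∑ z, ∑ y, ∑ w,
      (if ((x = y ∧ z = w) ∨ (x = z ∧ y = w) ∨ (x = w ∧ y = z))
        then f x y * f z w * c else 0))
    = c * ((∑ x, f x x) ^ 2 + (∑ x, ∑ y, f x y * f x y) + (∑ x, ∑ y, f x y * f y x)
        - 2 * ∑ x, f x x * f x x) := by
  have inner1 : ∀ x z : α, (∑ y, ∑ w, if x = y ∧ z = w then f x y * f z w * c else 0)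
      = f x x * f z z * c := by
    intro x z
    have h1 : ∀ y, (∑ w, if x = y ∧ z = w then f x y * f z w * c else 0)
        = if x = y then f x y * f z z * c else 0 := by
      intro y; by_cases h : x = y <;> simp [h]
    simp [h1]
  have inner2 : ∀ x z : α, (∑ y, ∑ w, if x = z ∧ y = w then f x y * f z w * c else 0)
      = if x = z then ∑ y, f x y * f z y * c else 0 := by
    intro x z
    have h1 : ∀ y, (∑ w, if x = z ∧ y = w then f x y * f z w * c else 0)
        = if x = z then f x y * f z y * c else 0 := by
      intro y; by_cases h : x = z <;> simp [h]
    by_cases h : x = z <;> simp [h1, h]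
  have inner3 : ∀ x z : α, (∑ y, ∑ w, if x = w ∧ y = z then f x y * f z w * c else 0)
      = f x z * f z x * c := by
    intro x z
    have h1 : ∀ y, (∑ w, if x = w ∧ y = z then f x y * f z w * c else 0)
        = if y = z then f x y * f z x * c else 0 := by
      intro y; by_cases h : y = z <;> simp [h, eq_comm]
    simp [h1]
  have innerD : ∀ x z : α, (∑ y, ∑ w, if x = y ∧ x = z ∧ x = w then f x y * f z w * c else 0)
      = if x = z then f x x * f z x * c else 0 := by
    intro x z
    have h1 : ∀ y, (∑ w, if x = y ∧ x = z ∧ x = w then f x y * f z w * c else 0)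
        = if x = y ∧ x = z then f x y * f z x * c else 0 := by
      intro y
      by_cases h : x = y ∧ x = z
      · obtain ⟨h1', h2'⟩ := h; simp [← h1', ← h2', eq_comm]
      · rw [if_neg h]
        refine Finset.sum_eq_zero fun w _ => ?_
        rw [if_neg (fun hc => h ⟨hc.1, hc.2.1⟩)]
    have h2 : ∀ y, (if x = y ∧ x = z then f x y * f z x * c else 0)
        = if x = y then (if x = z then f x y * f z x * c else 0) else 0 := by
      intro y; by_cases h : x = y <;> by_cases h' : x = z <;> simp [h, h']
    simp only [h1, h2]
    simp
  calc (∑ x, ∑ z, ∑ y, ∑ w,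
      (if ((x = y ∧ z = w) ∨ (x = z ∧ y = w) ∨ (x = w ∧ y = z))
        then f x y * f z w * c else 0))
      = ∑ x, ∑ z, ((∑ y, ∑ w, if x = y ∧ z = w then f x y * f z w * c else 0)
          + (∑ y, ∑ w, if x = z ∧ y = w then f x y * f z w * c else 0)
          + (∑ y, ∑ w, if x = w ∧ y = z then f x y * f z w * c else 0)
          - 2 * (∑ y, ∑ w, if x = y ∧ x = z ∧ x = w then f x y * f z w * c else 0)) := by
        refine Finset.sum_congr rfl fun x _ => Finset.sum_congr rfl fun z _ => ?_
        simp only [ite_incl_excl, Finset.sum_add_distrib, Finset.sum_sub_distrib,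
          ← Finset.mul_sum]
    _ = ∑ x, ∑ z, (f x x * f z z * c + (if x = z then ∑ y, f x y * f z y * c else 0)
          + f x z * f z x * c - 2 * (if x = z then f x x * f z x * c else 0)) := by
        refine Finset.sum_congr rfl fun x _ => Finset.sum_congr rfl fun z _ => ?_
        rw [inner1, inner2, inner3, innerD]
    _ = c * ((∑ x, f x x) ^ 2 + (∑ x, ∑ y, f x y * f x y) + (∑ x, ∑ y, f x y * f y x)
        - 2 * ∑ x, f x x * f x x) := by
        simp only [Finset.sum_add_distrib, Finset.sum_sub_distrib, Finset.sum_ite_eq,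
          Finset.mem_univ, if_true, ← Finset.mul_sum]
        simp only [← Finset.sum_mul]
        rw [sq, Finset.sum_mul_sum]
        ring


/-- Diagonal-block case of the variance computation: for Hermitian `M` with `‖M‖ ≤ 1`,
`E_A[tr(M φ_A φ_A†)] = tr(M)/2ⁿ`, `E_A[(tr(M φ_A φ_A†))²] ≤ (tr M)²/4ⁿ + 2·2^{-n}`, and hence
the variance of `tr(M φ_A φ_A†)` is at most `2·2^{-n}`. -/
theorem phaseProj_variance_bound (n : ℕ) (hn : 1 ≤ n)
    (M : Matrix (Fin n → ZMod 2) (Fin n → ZMod 2) ℂ) (hM : M.IsHermitian)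
    (hMnorm : ∀ v : EuclideanSpace ℂ (Fin n → ZMod 2),
      ‖Matrix.toEuclideanLin M v‖ ≤ ‖v‖) :
    ((2 ^ (n ^ 2) : ℝ)⁻¹ * ∑ A : Matrix (Fin n) (Fin n) (ZMod 2),
        ((M * phaseProj n A).trace).re = M.trace.re / 2 ^ n) ∧
    ((2 ^ (n ^ 2) : ℝ)⁻¹ * ∑ A : Matrix (Fin n) (Fin n) (ZMod 2),
        ((M * phaseProj n A).trace).re ^ 2
      ≤ M.trace.re ^ 2 / 4 ^ n + 2 / 2 ^ n) ∧
    ((2 ^ (n ^ 2) : ℝ)⁻¹ * ∑ A : Matrix (Fin n) (Fin n) (ZMod 2),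
        ((M * phaseProj n A).trace).re ^ 2
      - (M.trace.re / 2 ^ n) ^ 2 ≤ 2 / 2 ^ n) := by
  have hP : (0:ℝ) < 2 ^ n := by positivity
  have hQ : (0:ℝ) < 2 ^ (n ^ 2) := by positivity
  have h4 : (4:ℝ) ^ n = 2 ^ n * 2 ^ n := by
    rw [show (4:ℝ) = 2 * 2 by norm_num, mul_pow]
  set t : ℝ := ∑ x : Fin n → ZMod 2, (M x x).re with ht
  have htr : M.trace.re = t := by
    rw [Matrix.trace, Complex.re_sum]; rfl
  set S : ℝ := ∑ x : Fin n → ZMod 2, ∑ y : Fin n → ZMod 2, (M x y).re * (M x y).re with hS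
  set D : ℝ := ∑ x : Fin n → ZMod 2, (M x x).re * (M x x).re with hD
  -- first moment
  have S1 : (∑ A : Matrix (Fin n) (Fin n) (ZMod 2), ((M * phaseProj n A).trace).re)
      = (2 ^ n : ℝ)⁻¹ * (2 ^ (n ^ 2) * t) := by
    simp only [trace_re_eq]
    rw [← Finset.mul_sum]
    congr 1
    rw [Finset.sum_comm]
    calc ∑ x : Fin n → ZMod 2, ∑ A : Matrix (Fin n) (Fin n) (ZMod 2),
          ∑ y : Fin n → ZMod 2, (M x y).re * (eps n A x * eps n A y)
        = ∑ x : Fin n → ZMod 2, ∑ y : Fin n → ZMod 2,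
            ∑ A : Matrix (Fin n) (Fin n) (ZMod 2), (M x y).re * (eps n A x * eps n A y) := by
          exact Finset.sum_congr rfl fun x _ => Finset.sum_comm
      _ = ∑ x : Fin n → ZMod 2, ∑ y : Fin n → ZMod 2,
            (M x y).re * (if x = y then (2:ℝ)^(n^2) else 0) := by
          refine Finset.sum_congr rfl fun x _ => Finset.sum_congr rfl fun y _ => ?_
          rw [← Finset.mul_sum, sum_eps_two]
      _ = 2 ^ (n ^ 2) * t := by
          simp only [mul_ite, mul_zero, Finset.sum_ite_eq, Finset.mem_univ, if_true]
          rw [ht, Finset.mul_sum]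
          exact Finset.sum_congr rfl fun x _ => by ring
  -- second moment
  have S2 : (∑ A : Matrix (Fin n) (Fin n) (ZMod 2), ((M * phaseProj n A).trace).re ^ 2)
      = (2 ^ n : ℝ)⁻¹ * (2 ^ n : ℝ)⁻¹ * ((2:ℝ) ^ (n ^ 2) * (t ^ 2 + S + S - 2 * D)) := by
    have hsym : ∀ x y : Fin n → ZMod 2, (M y x).re = (M x y).re := by
      intro x y
      have := congrFun (congrFun hM.symm x) y
      rw [Matrix.conjTranspose_apply] at this
      rw [this]
      simp
    have step : (∑ A : Matrix (Fin n) (Fin n) (ZMod 2), ((M * phaseProj n A).trace).re ^ 2)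
        = (2 ^ n : ℝ)⁻¹ * (2 ^ n : ℝ)⁻¹ *
            ∑ A : Matrix (Fin n) (Fin n) (ZMod 2),
              ∑ x : Fin n → ZMod 2, ∑ z : Fin n → ZMod 2, ∑ y : Fin n → ZMod 2,
                ∑ w : Fin n → ZMod 2, ((M x y).re * (M z w).re) *
                  (eps n A x * eps n A y * (eps n A z * eps n A w)) := by
      rw [Finset.mul_sum]
      refine Finset.sum_congr rfl fun A _ => ?_
      rw [trace_re_eq]
      rw [mul_pow, sq, sq, Finset.sum_mul_sum]
      congr 1
      refine Finset.sum_congr rfl fun x _ => Finset.sum_congr rfl fun z _ => ?_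
      rw [Finset.sum_mul_sum]
      refine Finset.sum_congr rfl fun y _ => Finset.sum_congr rfl fun w _ => ?_
      ring
    rw [step]
    congr 1
    calc (∑ A : Matrix (Fin n) (Fin n) (ZMod 2),
              ∑ x : Fin n → ZMod 2, ∑ z : Fin n → ZMod 2, ∑ y : Fin n → ZMod 2,
                ∑ w : Fin n → ZMod 2, ((M x y).re * (M z w).re) *
                  (eps n A x * eps n A y * (eps n A z * eps n A w)))
        = ∑ x : Fin n → ZMod 2, ∑ z : Fin n → ZMod 2, ∑ y : Fin n → ZMod 2,
            ∑ w : Fin n → ZMod 2, ((M x y).re * (M z w).re) *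
              (∑ A : Matrix (Fin n) (Fin n) (ZMod 2),
                eps n A x * eps n A y * (eps n A z * eps n A w)) := by
          rw [Finset.sum_comm]
          refine Finset.sum_congr rfl fun x _ => ?_
          rw [Finset.sum_comm]
          refine Finset.sum_congr rfl fun z _ => ?_
          rw [Finset.sum_comm]
          refine Finset.sum_congr rfl fun y _ => ?_
          rw [Finset.sum_comm]
          refine Finset.sum_congr rfl fun w _ => ?_
          rw [← Finset.mul_sum]
      _ = ∑ x : Fin n → ZMod 2, ∑ z : Fin n → ZMod 2, ∑ y : Fin n → ZMod 2,
            ∑ w : Fin n → ZMod 2,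
              (if ((x = y ∧ z = w) ∨ (x = z ∧ y = w) ∨ (x = w ∧ y = z))
                then (M x y).re * (M z w).re * (2:ℝ)^(n^2) else 0) := by
          refine Finset.sum_congr rfl fun x _ => Finset.sum_congr rfl fun z _ =>
            Finset.sum_congr rfl fun y _ => Finset.sum_congr rfl fun w _ => ?_
          rw [sum_eps_four, mul_ite, mul_zero]
      _ = (2:ℝ)^(n^2) * ((∑ x : Fin n → ZMod 2, (M x x).re) ^ 2
            + (∑ x : Fin n → ZMod 2, ∑ y : Fin n → ZMod 2, (M x y).re * (M x y).re)
            + (∑ x : Fin n → ZMod 2, ∑ y : Fin n → ZMod 2, (M x y).re * (M y x).re)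
            - 2 * ∑ x : Fin n → ZMod 2, (M x x).re * (M x x).re) :=
          quad_sum (fun x y => (M x y).re) ((2:ℝ)^(n^2))
      _ = (2:ℝ) ^ (n ^ 2) * (t ^ 2 + S + S - 2 * D) := by
          congr 1
          have : (∑ x : Fin n → ZMod 2, ∑ y : Fin n → ZMod 2, (M x y).re * (M y x).re) = S := by
            rw [hS]
            exact Finset.sum_congr rfl fun x _ => Finset.sum_congr rfl fun y _ => by
              rw [hsym x y]
          rw [this, ht, hS, hD]
  have hS_le : S ≤ 2 ^ n := by
    rw [hS]
    calc (∑ x : Fin n → ZMod 2, ∑ y : Fin n → ZMod 2, (M x y).re * (M x y).re)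
        = ∑ x : Fin n → ZMod 2, ∑ y : Fin n → ZMod 2, (M x y).re ^ 2 := by
          exact Finset.sum_congr rfl fun x _ => Finset.sum_congr rfl fun y _ => (sq _).symm
      _ ≤ 2 ^ n := frob_bound n M hMnorm
  have hD_nn : 0 ≤ D :=
    Finset.sum_nonneg fun x _ => mul_self_nonneg _
  have part1 : (2 ^ (n ^ 2) : ℝ)⁻¹ * ∑ A : Matrix (Fin n) (Fin n) (ZMod 2),
      ((M * phaseProj n A).trace).re = M.trace.re / 2 ^ n := by
    rw [S1, htr]
    field_simp
  have part2 : (2 ^ (n ^ 2) : ℝ)⁻¹ * ∑ A : Matrix (Fin n) (Fin n) (ZMod 2),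
      ((M * phaseProj n A).trace).re ^ 2 ≤ M.trace.re ^ 2 / 4 ^ n + 2 / 2 ^ n := by
    rw [S2, htr]
    have heq : (2 ^ (n ^ 2) : ℝ)⁻¹ * ((2 ^ n : ℝ)⁻¹ * (2 ^ n : ℝ)⁻¹ *
        ((2:ℝ) ^ (n ^ 2) * (t ^ 2 + S + S - 2 * D)))
        = (t ^ 2 + S + S - 2 * D) / (2 ^ n * 2 ^ n) := by
      field_simp
    rw [heq, h4]
    rw [div_add_div _ _ (by positivity : (2:ℝ) ^ n * 2 ^ n ≠ 0) (by positivity : (2:ℝ) ^ n ≠ 0)]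
    rw [div_le_div_iff₀ (by positivity) (by positivity)]
    have h1 : S * (2^n * 2^n * 2^n) ≤ 2^n * (2^n * 2^n * 2^n) :=
      mul_le_mul_of_nonneg_right hS_le (by positivity)
    have h2 : (0:ℝ) ≤ D * (2^n * 2^n * 2^n) := mul_nonneg hD_nn (by positivity)
    nlinarith [h1, h2]
  refine ⟨part1, part2, ?_⟩
  have hsq : (M.trace.re / 2 ^ n) ^ 2 = M.trace.re ^ 2 / 4 ^ n := by
    rw [div_pow, h4]; ring
  linarith [part2]
end

section
/- Let σ be a positive definite complex d×d matrix with tr(σ) = 1, let ρ₁, …, ρ_m be density matrices (positive semidefinite with trace 1) on ℂᵈ, and let M be a Hermitian d×d matrix with operator norm ‖M‖ ≤ 1. Setting ρ̂_i := ρ_i σ^{−1} − I, one has ( Σ_{i=1}^m |tr(M(ρ_i − σ))| )² ≤ Σ_{i=1}^m Σ_{j=1}^m |tr(ρ̂_i ρ̂_j σ)|. -/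
open Matrix
open scoped ComplexOrder

private lemma trace_inner_aux {d : ℕ} (A B : Matrix (Fin d) (Fin d) ℂ) :
    (Aᴴ * B).trace =
      inner ℂ ((WithLp.equiv 2 (Fin d × Fin d → ℂ)).symm fun p => A p.1 p.2)
        ((WithLp.equiv 2 (Fin d × Fin d → ℂ)).symm fun p => B p.1 p.2) := by
  rw [Matrix.trace, PiLp.inner_apply]
  simp only [Matrix.diag, Matrix.mul_apply, Matrix.conjTranspose_apply, Fintype.sum_prod_type,
    WithLp.equiv_symm_apply, PiLp.toLp_apply, RCLike.inner_apply, starRingEnd_apply]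
  rw [Finset.sum_comm]
  exact Finset.sum_congr rfl fun _ _ => Finset.sum_congr rfl fun _ _ => mul_comm _ _

private lemma cs_trace {d : ℕ} (A B : Matrix (Fin d) (Fin d) ℂ) :
    ‖(Aᴴ * B).trace‖ ^ 2 ≤ ((Aᴴ * A).trace).re * ((Bᴴ * B).trace).re := by
  rw [trace_inner_aux, trace_inner_aux, trace_inner_aux]
  set x : EuclideanSpace ℂ (Fin d × Fin d) :=
    (WithLp.equiv 2 (Fin d × Fin d → ℂ)).symm fun p => A p.1 p.2
  set y : EuclideanSpace ℂ (Fin d × Fin d) :=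
    (WithLp.equiv 2 (Fin d × Fin d → ℂ)).symm fun p => B p.1 p.2
  have hx : (inner ℂ x x).re = ‖x‖ ^ 2 := @inner_self_eq_norm_sq ℂ _ _ _ _ x
  have hy : (inner ℂ y y).re = ‖y‖ ^ 2 := @inner_self_eq_norm_sq ℂ _ _ _ _ y
  have h := @norm_inner_le_norm ℂ _ _ _ _ x y
  rw [hx, hy]
  calc ‖(inner ℂ x y)‖ ^ 2 ≤ (‖x‖ * ‖y‖) ^ 2 := by
        exact pow_le_pow_left₀ (norm_nonneg _) h 2
    _ = ‖x‖ ^ 2 * ‖y‖ ^ 2 := by ring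

private lemma trace_ctm_re {d : ℕ} (X : Matrix (Fin d) (Fin d) ℂ) :
    ((Xᴴ * X).trace).re = ∑ j, ∑ k, ‖X k j‖ ^ 2 := by
  rw [Matrix.trace]
  simp only [Matrix.diag, Matrix.mul_apply, Matrix.conjTranspose_apply, Complex.re_sum]
  refine Finset.sum_congr rfl fun j _ => ?_
  refine Finset.sum_congr rfl fun k _ => ?_
  have hs : star (X k j) = (starRingEnd ℂ) (X k j) := rfl
  rw [hs, mul_comm, Complex.mul_conj]
  simp [Complex.sq_norm]

set_option maxHeartbeats 2000000 in
private lemma opnorm_mulVec {d : ℕ} (M : Matrix (Fin d) (Fin d) ℂ)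
    (hMnorm : ∀ v : EuclideanSpace ℂ (Fin d), ‖Matrix.toEuclideanLin M v‖ ≤ ‖v‖)
    (w : Fin d → ℂ) :
    ∑ k, ‖(M *ᵥ w) k‖ ^ 2 ≤ ∑ k, ‖w k‖ ^ 2 := by
  have h := hMnorm ((WithLp.equiv 2 (Fin d → ℂ)).symm w)
  rw [Matrix.toEuclideanLin_apply, EuclideanSpace.norm_eq, EuclideanSpace.norm_eq] at h
  simp only [WithLp.equiv_symm_apply, PiLp.toLp_apply, Equiv.apply_symm_apply] at h
  exact (Real.sqrt_le_sqrt_iff (by positivity)).mp h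

set_option maxHeartbeats 2000000 in
/-- Key inequality behind the average-correlation lower bound: for a positive definite
reference state `σ`, density matrices `ρ_i`, and a Hermitian observable `M` with `‖M‖ ≤ 1`,
setting `ρ̂_i = ρ_i σ⁻¹ - I`, one has
`(Σ_i |tr(M(ρ_i - σ))|)² ≤ Σ_{i,j} |tr(ρ̂_i ρ̂_j σ)|`. -/
theorem average_correlation_inequality (d m : ℕ)
    (σ : Matrix (Fin d) (Fin d) ℂ) (hσ : σ.PosDef) (hσtr : σ.trace = 1)
    (ρ : Fin m → Matrix (Fin d) (Fin d) ℂ)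
    (hρ : ∀ i, (ρ i).PosSemidef) (hρtr : ∀ i, (ρ i).trace = 1)
    (M : Matrix (Fin d) (Fin d) ℂ) (hM : M.IsHermitian)
    (hMnorm : ∀ v : EuclideanSpace ℂ (Fin d), ‖Matrix.toEuclideanLin M v‖ ≤ ‖v‖) :
    (∑ i : Fin m, ‖(M * (ρ i - σ)).trace‖) ^ 2
      ≤ ∑ i : Fin m, ∑ j : Fin m,
          ‖((ρ i * σ⁻¹ - 1) * (ρ j * σ⁻¹ - 1) * σ).trace‖ := by
  classical
  set t : Fin m → ℂ := fun i => (M * (ρ i - σ)).trace with ht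
  set ε : Fin m → ℂ := fun i =>
    if t i = 0 then 0 else (starRingEnd ℂ) (t i) / (‖t i‖ : ℂ) with hε
  have hεabs : ∀ i, ‖ε i‖ ≤ 1 := by
    intro i
    simp only [hε]
    split_ifs with h
    · simp
    · rw [norm_div, Complex.norm_conj, Complex.norm_real, norm_norm,
        div_self (norm_ne_zero_iff.mpr h)]
  have hεt : ∀ i, ε i * t i = (‖t i‖ : ℂ) := by
    intro i
    simp only [hε]
    split_ifs with h
    · simp [h]
    · have habs : (‖t i‖ : ℂ) ≠ 0 := by
        simpa using (norm_ne_zero_iff.mpr h)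
      field_simp
      rw [mul_comm, Complex.mul_conj, Complex.normSq_eq_norm_sq]
      push_cast
      ring
  open scoped MatrixOrder in
  set S := CFC.sqrt σ with hSdef
  have hSH : Sᴴ = S := by
    open scoped MatrixOrder in
    exact (Matrix.nonneg_iff_posSemidef.mp (CFC.sqrt_nonneg σ)).isHermitian
  have hSS : S * S = σ := by
    open scoped MatrixOrder in
    exact CFC.sqrt_mul_sqrt_self σ (Matrix.nonneg_iff_posSemidef.mpr hσ.posSemidef)
  have hσdet : IsUnit σ.det := (Matrix.isUnit_iff_isUnit_det σ).mp hσ.isUnit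
  have hSdet : IsUnit S.det := by
    have hd : S.det * S.det = σ.det := by rw [← Matrix.det_mul, hSS]
    exact isUnit_of_mul_isUnit_left (hd ▸ hσdet)
  have hS1 : S * S⁻¹ = 1 := Matrix.mul_nonsing_inv _ hSdet
  have hσ1 : σ * σ⁻¹ = 1 := Matrix.mul_nonsing_inv _ hσdet
  have hσ2 : σ⁻¹ * σ = 1 := Matrix.nonsing_inv_mul _ hσdet
  have hσinv : σ⁻¹ = S⁻¹ * S⁻¹ := by rw [← hSS, Matrix.mul_inv_rev]
  have hSinvH : S⁻¹ᴴ = S⁻¹ := by rw [Matrix.conjTranspose_nonsing_inv, hSH]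
  have hHerm : ∀ i, (ρ i - σ)ᴴ = ρ i - σ := fun i => (hρ i).isHermitian.sub hσ.isHermitian
  set H : Matrix (Fin d) (Fin d) ℂ := ∑ i, ε i • (ρ i - σ) with hH
  -- trace of M * H
  have hMH : (M * H).trace = ∑ i, ε i * t i := by
    rw [hH, Finset.mul_sum, Matrix.trace_sum]
    refine Finset.sum_congr rfl fun i _ => ?_
    rw [Matrix.mul_smul, Matrix.trace_smul, smul_eq_mul]
  have habsMH : ‖(M * H).trace‖ = ∑ i, ‖t i‖ := by
    rw [hMH, Finset.sum_congr rfl fun i _ => hεt i, ← Complex.ofReal_sum,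
      Complex.norm_real, Real.norm_eq_abs, abs_of_nonneg]
    exact Finset.sum_nonneg fun i _ => norm_nonneg _
  -- operator norm hypothesis, entrywise
  have hkey := opnorm_mulVec M hMnorm
  -- Cauchy-Schwarz setup
  have hMHtr : (M * H).trace = ((S * M)ᴴ * (S⁻¹ * H)).trace := by
    rw [Matrix.conjTranspose_mul, hSH, hM.eq, Matrix.mul_assoc,
      ← Matrix.mul_assoc S S⁻¹ H, hS1, Matrix.one_mul]
  have hcs := cs_trace (S * M) (S⁻¹ * H)
  -- first factor ≤ 1
  have hF1 : (((S * M)ᴴ * (S * M)).trace).re ≤ 1 := by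
    have e1 : ((S * M)ᴴ * (S * M)).trace = ((M * S)ᴴ * (M * S)).trace := by
      rw [Matrix.conjTranspose_mul, Matrix.conjTranspose_mul, hSH, hM.eq,
        Matrix.trace_mul_comm]
    rw [e1, trace_ctm_re]
    have hle : ∀ j : Fin d, ∑ k, ‖(M * S) k j‖ ^ 2
        ≤ ∑ k, ‖S k j‖ ^ 2 := by
      intro j
      have := hkey fun l => S l j
      simpa [Matrix.mul_apply, Matrix.mulVec, dotProduct] using this
    calc ∑ j, ∑ k, ‖(M * S) k j‖ ^ 2
        ≤ ∑ j, ∑ k, ‖S k j‖ ^ 2 := Finset.sum_le_sum fun j _ => hle j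
      _ = ((Sᴴ * S).trace).re := (trace_ctm_re S).symm
      _ = 1 := by rw [hSH, hSS, hσtr]; rfl
  -- second factor
  have e2 : (S⁻¹ * H)ᴴ * (S⁻¹ * H) = Hᴴ * (σ⁻¹ * H) := by
    rw [Matrix.conjTranspose_mul, hSinvH, Matrix.mul_assoc,
      ← Matrix.mul_assoc S⁻¹ S⁻¹ H, ← hσinv]
  set z : Fin m → Fin m → ℂ := fun i j => ((ρ i - σ) * (σ⁻¹ * (ρ j - σ))).trace with hz
  have hexp : (Hᴴ * (σ⁻¹ * H)).trace
      = ∑ i, ∑ j, ((starRingEnd ℂ) (ε i) * ε j) * z i j := by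
    have hHc : Hᴴ = ∑ i, (starRingEnd ℂ) (ε i) • (ρ i - σ) := by
      rw [hH, Matrix.conjTranspose_sum]
      exact Finset.sum_congr rfl fun i _ => by
        rw [Matrix.conjTranspose_smul, hHerm i]; rfl
    have hσH : σ⁻¹ * H = ∑ j, ε j • (σ⁻¹ * (ρ j - σ)) := by
      rw [hH, Finset.mul_sum]
      exact Finset.sum_congr rfl fun j _ => (Matrix.mul_smul _ _ _)
    rw [hHc, hσH, Finset.sum_mul_sum, Matrix.trace_sum]
    refine Finset.sum_congr rfl fun i _ => ?_
    rw [Matrix.trace_sum]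
    refine Finset.sum_congr rfl fun j _ => ?_
    rw [Matrix.smul_mul, Matrix.mul_smul, Matrix.trace_smul, Matrix.trace_smul,
      smul_eq_mul, smul_eq_mul, hz]
    ring
  have hF2nonneg : 0 ≤ (((S⁻¹ * H)ᴴ * (S⁻¹ * H)).trace).re := by
    rw [trace_ctm_re]
    exact Finset.sum_nonneg fun j _ => Finset.sum_nonneg fun k _ =>
      pow_nonneg (norm_nonneg _) 2
  have hbound : (((S⁻¹ * H)ᴴ * (S⁻¹ * H)).trace).re
      ≤ ∑ i, ∑ j, ‖z i j‖ := by
    rw [e2, hexp, Complex.re_sum]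
    refine Finset.sum_le_sum fun i _ => ?_
    rw [Complex.re_sum]
    refine Finset.sum_le_sum fun j _ => ?_
    calc (((starRingEnd ℂ) (ε i) * ε j) * z i j).re
        ≤ ‖((starRingEnd ℂ) (ε i) * ε j) * z i j‖ := Complex.re_le_norm _
      _ = ‖ε i‖ * ‖ε j‖ * ‖z i j‖ := by
          rw [norm_mul, norm_mul, Complex.norm_conj]
      _ ≤ 1 * 1 * ‖z i j‖ := by
          gcongr
          · exact hεabs i
          · exact hεabs j
      _ = ‖z i j‖ := by ring
  have hzid : ∀ i j, ((ρ i * σ⁻¹ - 1) * (ρ j * σ⁻¹ - 1) * σ).trace = z i j := by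
    intro i j
    rw [hz]
    congr 1
    have h1 : ρ i * σ⁻¹ - 1 = (ρ i - σ) * σ⁻¹ := by rw [Matrix.sub_mul, hσ1]
    have h2 : (ρ j * σ⁻¹ - 1) * σ = ρ j - σ := by
      rw [Matrix.sub_mul, Matrix.one_mul, Matrix.mul_assoc, hσ2, Matrix.mul_one]
    calc (ρ i * σ⁻¹ - 1) * (ρ j * σ⁻¹ - 1) * σ
        = (ρ i * σ⁻¹ - 1) * ((ρ j * σ⁻¹ - 1) * σ) := Matrix.mul_assoc _ _ _
      _ = ((ρ i - σ) * σ⁻¹) * (ρ j - σ) := by rw [h1, h2]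
      _ = (ρ i - σ) * (σ⁻¹ * (ρ j - σ)) := Matrix.mul_assoc _ _ _
  calc (∑ i, ‖t i‖) ^ 2
      = ‖(M * H).trace‖ ^ 2 := by rw [habsMH]
    _ ≤ (((S * M)ᴴ * (S * M)).trace).re * (((S⁻¹ * H)ᴴ * (S⁻¹ * H)).trace).re := by
        rw [hMHtr]; exact hcs
    _ ≤ 1 * (((S⁻¹ * H)ᴴ * (S⁻¹ * H)).trace).re :=
        mul_le_mul_of_nonneg_right hF1 hF2nonneg
    _ = (((S⁻¹ * H)ᴴ * (S⁻¹ * H)).trace).re := one_mul _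
    _ ≤ ∑ i, ∑ j, ‖z i j‖ := hbound
    _ = ∑ i, ∑ j, ‖((ρ i * σ⁻¹ - 1) * (ρ j * σ⁻¹ - 1) * σ).trace‖ := by
        refine Finset.sum_congr rfl fun i _ => Finset.sum_congr rfl fun j _ => ?_
        rw [hzid]
end

section
/- Let ψ₁, …, ψ_m be unit vectors in ℂᵈ such that every pairwise inner product ⟨ψ_i, ψ_j⟩ is real and nonnegative, and let ρ = (1/m) Σ_{i=1}^m ψ_i ψ_i† be their uniform mixture. Then the largest eigenvalue of ρ is at least the square of the average overlap: λ_max(ρ) ≥ ( (1/m²) Σ_{i,j} ⟨ψ_i, ψ_j⟩ )². -/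
open Matrix

lemma dp_sum {d m : ℕ} (v : Fin d → ℂ) (w : Fin m → Fin d → ℂ) :
    v ⬝ᵥ (∑ i : Fin m, w i) = ∑ i : Fin m, v ⬝ᵥ w i := by
  simp only [dotProduct, Finset.sum_apply, Finset.mul_sum]
  exact Finset.sum_comm

lemma sum_dp {d m : ℕ} (v : Fin m → Fin d → ℂ) (w : Fin d → ℂ) :
    (∑ i : Fin m, v i) ⬝ᵥ w = ∑ i : Fin m, v i ⬝ᵥ w := by
  simp only [dotProduct, Finset.sum_apply, Finset.sum_mul]
  exact Finset.sum_comm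

lemma ray_form {d m : ℕ} (ψ : Fin m → Fin d → ℂ) (v : Fin d → ℂ) :
    star v ⬝ᵥ (((m : ℂ)⁻¹ • ∑ i : Fin m,
        Matrix.vecMulVec (ψ i) (star (ψ i))).mulVec v)
      = (m : ℂ)⁻¹ * ∑ i : Fin m, (star v ⬝ᵥ ψ i) * (star (ψ i) ⬝ᵥ v) := by
  have hsum : (∑ i : Fin m, Matrix.vecMulVec (ψ i) (star (ψ i))) *ᵥ v
      = ∑ i : Fin m, (star (ψ i) ⬝ᵥ v) • ψ i := by
    funext x
    simp only [mulVec, vecMulVec, dotProduct, Finset.sum_apply, Matrix.sum_apply,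
      Pi.smul_apply, smul_eq_mul, Finset.sum_mul, of_apply]
    rw [Finset.sum_comm]
    apply Finset.sum_congr rfl
    intro i _
    apply Finset.sum_congr rfl
    intro y _
    ring
  rw [Matrix.smul_mulVec, dotProduct_smul, smul_eq_mul, hsum, dp_sum]
  congr 1
  apply Finset.sum_congr rfl
  intro i _
  rw [dotProduct_smul, smul_eq_mul]
  ring

/-- If `ψ₁, …, ψ_m` are unit vectors in `ℂᵈ` with pairwise real nonnegative inner products,
then the largest eigenvalue of their uniform mixture `ρ = (1/m) Σ_i ψ_i ψ_i†` — expressed as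
the supremum of the Rayleigh quotient, witnessed by a unit vector — is at least the square of
the average overlap `(1/m²) Σ_{i,j} ⟨ψ_i, ψ_j⟩`. -/
theorem mixture_top_eigenvalue_bound (d m : ℕ) (hd : 1 ≤ d) (hm : 1 ≤ m)
    (ψ : Fin m → Fin d → ℂ)
    (hunit : ∀ i, star (ψ i) ⬝ᵥ ψ i = 1)
    (hre : ∀ i j, (star (ψ i) ⬝ᵥ ψ j).im = 0 ∧ 0 ≤ (star (ψ i) ⬝ᵥ ψ j).re) :
    ∃ v : Fin d → ℂ, star v ⬝ᵥ v = 1 ∧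
      (((m : ℝ) ^ 2)⁻¹ * ∑ i : Fin m, ∑ j : Fin m, (star (ψ i) ⬝ᵥ ψ j).re) ^ 2
        ≤ (star v ⬝ᵥ
            (((m : ℂ)⁻¹ • ∑ i : Fin m,
              Matrix.vecMulVec (ψ i) (star (ψ i))).mulVec v)).re := by
  -- each overlap is real and equals its real part
  have hij : ∀ i j, star (ψ i) ⬝ᵥ ψ j = ((star (ψ i) ⬝ᵥ ψ j).re : ℂ) := by
    intro i j
    exact Complex.ext rfl (by simpa using (hre i j).1)
  set w : Fin d → ℂ := ∑ i : Fin m, ψ i with hw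
  set a : Fin m → ℝ := fun i => ∑ j : Fin m, (star (ψ i) ⬝ᵥ ψ j).re with ha
  have hA : ∀ i, star (ψ i) ⬝ᵥ w = ((a i : ℝ) : ℂ) := by
    intro i
    rw [hw, dp_sum, ha]
    push_cast
    exact Finset.sum_congr rfl fun j _ => hij i j
  have hB : ∀ i, star w ⬝ᵥ ψ i = ((a i : ℝ) : ℂ) := by
    intro i
    rw [star_dotProduct, hA i]
    simp
  set c : ℝ := ∑ i : Fin m, a i with hc
  have hC : star w ⬝ᵥ w = ((c : ℝ) : ℂ) := by
    have : star w = ∑ i : Fin m, star (ψ i) := by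
      rw [hw]; exact star_sum _ _
    rw [this, sum_dp, hc]
    push_cast
    exact Finset.sum_congr rfl fun i _ => hA i
  -- bounds on a
  have ha_nonneg : ∀ i, 0 ≤ a i := fun i =>
    Finset.sum_nonneg fun j _ => (hre i j).2
  have ha_ge : ∀ i, 1 ≤ a i := by
    intro i
    have h1 : (star (ψ i) ⬝ᵥ ψ i).re = 1 := by rw [hunit i]; simp
    calc (1 : ℝ) = (star (ψ i) ⬝ᵥ ψ i).re := h1.symm
      _ ≤ a i := Finset.single_le_sum (fun j _ => (hre i j).2) (Finset.mem_univ i)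
  -- Cauchy-Schwarz: each overlap ≤ 1
  have hle1 : ∀ i j, (star (ψ i) ⬝ᵥ ψ j).re ≤ 1 := by
    intro i j
    set x : EuclideanSpace ℂ (Fin d) := (WithLp.equiv 2 (Fin d → ℂ)).symm (ψ i)
    set y : EuclideanSpace ℂ (Fin d) := (WithLp.equiv 2 (Fin d → ℂ)).symm (ψ j)
    have hx : (inner ℂ x y : ℂ) = star (ψ i) ⬝ᵥ ψ j := by
      rw [EuclideanSpace.inner_eq_star_dotProduct, dotProduct_comm]; simp [x, y]
    have hnorm : ∀ k, ‖(WithLp.equiv 2 (Fin d → ℂ)).symm (ψ k)‖ = 1 := by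
      intro k
      have h1 : (inner ℂ ((WithLp.equiv 2 (Fin d → ℂ)).symm (ψ k))
          ((WithLp.equiv 2 (Fin d → ℂ)).symm (ψ k)) : ℂ) = 1 := by
        rw [EuclideanSpace.inner_eq_star_dotProduct, dotProduct_comm]; simpa using hunit k
      have h2 : ‖(WithLp.equiv 2 (Fin d → ℂ)).symm (ψ k)‖ ^ 2 = 1 := by
        rw [← inner_self_eq_norm_sq (𝕜 := ℂ)]
        rw [h1]; simp
      nlinarith [norm_nonneg ((WithLp.equiv 2 (Fin d → ℂ)).symm (ψ k))]
    calc (star (ψ i) ⬝ᵥ ψ j).re = (inner ℂ x y : ℂ).re := by rw [hx]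
      _ ≤ ‖(inner ℂ x y : ℂ)‖ := Complex.re_le_norm _
      _ ≤ ‖x‖ * ‖y‖ := norm_inner_le_norm x y
      _ = 1 := by rw [hnorm i, hnorm j]; ring
  have ha_le : ∀ i, a i ≤ m := by
    intro i
    calc a i ≤ ∑ _j : Fin m, (1 : ℝ) := Finset.sum_le_sum fun j _ => hle1 i j
      _ = m := by simp
  have hc_pos : 0 < c := by
    have : (m : ℝ) ≤ c := by
      calc (m : ℝ) = ∑ _i : Fin m, (1:ℝ) := by simp
        _ ≤ c := Finset.sum_le_sum fun i _ => ha_ge i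
    have hm' : (1 : ℝ) ≤ m := by exact_mod_cast hm
    linarith
  have hc_le : c ≤ (m : ℝ) ^ 2 := by
    calc c ≤ ∑ _i : Fin m, (m : ℝ) := Finset.sum_le_sum fun i _ => ha_le i
      _ = (m : ℝ) ^ 2 := by simp; ring
  -- the witness
  set t : ℝ := (Real.sqrt c)⁻¹ with ht
  have hsqrt : Real.sqrt c * Real.sqrt c = c := Real.mul_self_sqrt hc_pos.le
  have hsqrt_pos : 0 < Real.sqrt c := Real.sqrt_pos.mpr hc_pos
  refine ⟨(t : ℂ) • w, ?_, ?_⟩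
  · have hstar : star ((t : ℂ) • w) = (t : ℂ) • star w := by
      rw [star_smul]; simp
    rw [hstar, smul_dotProduct, dotProduct_smul, hC]
    simp only [smul_eq_mul]
    rw [show ((t:ℂ)) * ((t:ℂ) * ((c:ℝ):ℂ)) = (((t*t*c : ℝ)):ℂ) by push_cast; ring]
    norm_cast
    rw [ht, ← mul_inv, hsqrt]
    exact inv_mul_cancel₀ hc_pos.ne'
  · rw [ray_form]
    have hstar : star ((t : ℂ) • w) = (t : ℂ) • star w := by
      rw [star_smul]; simp
    have hterm : ∀ i, (star ((t : ℂ) • w) ⬝ᵥ ψ i) * (star (ψ i) ⬝ᵥ ((t : ℂ) • w))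
        = ((t * a i) * (t * a i) : ℝ) := by
      intro i
      rw [hstar, smul_dotProduct, dotProduct_smul, hA i, hB i]
      simp only [smul_eq_mul]
      push_cast
      ring
    rw [Finset.sum_congr rfl fun i _ => hterm i]
    rw [← Complex.ofReal_sum]
    have hre_eq : ((m : ℂ)⁻¹ * ((∑ i : Fin m, t * a i * (t * a i) : ℝ) : ℂ)).re
        = (m : ℝ)⁻¹ * ∑ i : Fin m, t * a i * (t * a i) := by
      rw [show ((m : ℂ))⁻¹ = (((m : ℝ)⁻¹ : ℝ) : ℂ) by push_cast; ring]
      rw [← Complex.ofReal_mul, Complex.ofReal_re]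
    rw [hre_eq]
    -- now pure real inequality
    have hsum_sq : c ^ 2 ≤ (m : ℝ) * ∑ i : Fin m, a i ^ 2 := by
      have := sq_sum_le_card_mul_sum_sq (s := Finset.univ) (f := a)
      simpa [hc] using this
    have hS : ∑ i : Fin m, t * a i * (t * a i) = c⁻¹ * ∑ i : Fin m, a i ^ 2 := by
      rw [Finset.mul_sum]
      apply Finset.sum_congr rfl
      intro i _
      have : t * t = c⁻¹ := by
        rw [ht, ← mul_inv]
        rw [hsqrt]
      calc t * a i * (t * a i) = (t * t) * a i ^ 2 := by ring
        _ = c⁻¹ * a i ^ 2 := by rw [this]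
    rw [hS]
    have hLHS : (((m : ℝ) ^ 2)⁻¹ * ∑ i : Fin m, ∑ j : Fin m, (star (ψ i) ⬝ᵥ ψ j).re) 
        = ((m : ℝ) ^ 2)⁻¹ * c := by rw [hc, ha]
    rw [hLHS]
    have hm' : (1 : ℝ) ≤ m := by exact_mod_cast hm
    have hmpos : (0 : ℝ) < m := by linarith
    have key : c / (m : ℝ) ^ 2 ≤ 1 := by
      rw [div_le_one (by positivity)]; exact hc_le
    have key' : ((m : ℝ) ^ 2)⁻¹ * c ≤ 1 := by
      rw [mul_comm, ← div_eq_mul_inv]; exact key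
    have h1 : (((m : ℝ) ^ 2)⁻¹ * c) ^ 2 ≤ ((m : ℝ) ^ 2)⁻¹ * c := by
      have h0 : 0 ≤ ((m : ℝ) ^ 2)⁻¹ * c := by positivity
      nlinarith [key']
    have h2 : ((m : ℝ) ^ 2)⁻¹ * c ≤ (m : ℝ)⁻¹ * (c⁻¹ * ∑ i : Fin m, a i ^ 2) := by
      rw [← mul_le_mul_iff_right₀ (show (0:ℝ) < (m : ℝ) * c by positivity)]
      have e1 : (m : ℝ) * c * (((m : ℝ) ^ 2)⁻¹ * c) = c ^ 2 / m := by
        field_simp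
      have e2 : (m : ℝ) * c * ((m : ℝ)⁻¹ * (c⁻¹ * ∑ i : Fin m, a i ^ 2))
          = ∑ i : Fin m, a i ^ 2 := by
        field_simp
      rw [e1, e2]
      rw [div_le_iff₀ hmpos]
      nlinarith [hsum_sq]
    linarith
end

section
/- Let n ≥ 1 and let A, B be n×n matrices over F₂ with f_A ≠ f_B as functions (there exists x with xᵀAx ≠ xᵀBx). Define probability mass functions on F₂ⁿ × F₂ by P_A(x,y) = 2^{−n}·[y = xᵀAx] and P_B(x,y) = 2^{−n}·[y = xᵀBx]. Then d_TV(P_A, P_B) = Pr_{x ∼ F₂ⁿ}[xᵀAx ≠ xᵀBx] ≥ 1/4. -/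
open Matrix

private lemma zmod2_ne_iff : ∀ u v : ZMod 2, u ≠ v ↔ u + v = 1 := by decide

private lemma zmod2_sum (f : ZMod 2 → ℝ) : ∑ y, f y = f 0 + f 1 := by
  rw [show (Finset.univ : Finset (ZMod 2)) = {0, 1} from by decide]
  simp [Finset.sum_pair (by decide : (0:ZMod 2) ≠ 1)]

/-- For distinct quadratic functions `f_A ≠ f_B`, the total variation distance between the
induced example distributions `P_A, P_B` on `F₂ⁿ × F₂` equals `Pr_x[xᵀAx ≠ xᵀBx]`, which is
at least `1/4`. -/
theorem deg2_example_distribution_tv (n : ℕ) (hn : 1 ≤ n)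
    (A B : Matrix (Fin n) (Fin n) (ZMod 2))
    (h : ∃ x : Fin n → ZMod 2, x ⬝ᵥ A.mulVec x ≠ x ⬝ᵥ B.mulVec x) :
    ((1 / 2) * ∑ p : (Fin n → ZMod 2) × ZMod 2,
        |(if p.2 = p.1 ⬝ᵥ A.mulVec p.1 then ((2 : ℝ) ^ n)⁻¹ else 0)
          - (if p.2 = p.1 ⬝ᵥ B.mulVec p.1 then ((2 : ℝ) ^ n)⁻¹ else 0)|
      = ((Finset.univ.filter (fun x : Fin n → ZMod 2 =>
            x ⬝ᵥ A.mulVec x ≠ x ⬝ᵥ B.mulVec x)).card : ℝ) / 2 ^ n) ∧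
    ((1 / 4 : ℝ) ≤ ((Finset.univ.filter (fun x : Fin n → ZMod 2 =>
            x ⬝ᵥ A.mulVec x ≠ x ⬝ᵥ B.mulVec x)).card : ℝ) / 2 ^ n) := by
  set c : ℝ := ((2 : ℝ) ^ n)⁻¹ with hc
  have hcpos : 0 < c := by positivity
  set fA : (Fin n → ZMod 2) → ZMod 2 := fun x => x ⬝ᵥ A.mulVec x with hfA
  set fB : (Fin n → ZMod 2) → ZMod 2 := fun x => x ⬝ᵥ B.mulVec x with hfB
  set S : Finset (Fin n → ZMod 2) := Finset.univ.filter (fun x => fA x ≠ fB x) with hS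
  constructor
  · -- TV formula
    have hsum : ∀ u v : ZMod 2,
        (∑ y : ZMod 2, |(if y = u then c else 0) - (if y = v then c else 0)|)
          = if u = v then 0 else 2 * c := by
      intro u v
      by_cases huv : u = v
      · subst huv; simp
      · have huv' : (u = 0 ∧ v = 1) ∨ (u = 1 ∧ v = 0) := by
          revert huv; revert u v; decide
        rw [zmod2_sum]
        rcases huv' with ⟨hu, hv⟩ | ⟨hu, hv⟩ <;> subst hu <;> subst hv <;>
          simp [show (0:ZMod 2) ≠ 1 from by decide, show (1:ZMod 2) ≠ 0 from by decide,
            abs_of_nonneg hcpos.le, abs_of_nonpos (neg_nonpos.mpr hcpos.le), huv] <;>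
          ring
    rw [Fintype.sum_prod_type]
    have : ∀ x : Fin n → ZMod 2,
        (∑ y : ZMod 2, |(if y = fA x then c else 0) - (if y = fB x then c else 0)|)
          = if fA x = fB x then 0 else 2 * c := fun x => hsum _ _
    rw [Finset.sum_congr rfl (fun x _ => this x), Finset.mul_sum]
    have : ∀ x : Fin n → ZMod 2,
        (1/2 : ℝ) * (if fA x = fB x then 0 else 2 * c) = if fA x ≠ fB x then c else 0 := by
      intro x; by_cases hx : fA x = fB x <;> simp [hx] <;> ring
    rw [Finset.sum_congr rfl (fun x _ => this x), ← Finset.sum_filter]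
    rw [Finset.sum_const, nsmul_eq_mul, div_eq_mul_inv]
  · -- Schwartz–Zippel lower bound
    obtain ⟨a, ha⟩ := h
    set F : (Fin n → ZMod 2) → ZMod 2 := fun x => fA x + fB x with hF
    have hFa : F a = 1 := (zmod2_ne_iff _ _).mp ha
    set b : (Fin n → ZMod 2) → (Fin n → ZMod 2) → ZMod 2 :=
      fun x y => x ⬝ᵥ A.mulVec y + y ⬝ᵥ A.mulVec x + x ⬝ᵥ B.mulVec y + y ⬝ᵥ B.mulVec x with hb
    have hFadd : ∀ x y, F (x + y) = F x + F y + b x y := by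
      intro x y
      simp only [hF, hfA, hfB, hb, Matrix.mulVec_add, add_dotProduct, dotProduct_add]
      ring
    have hbadd : ∀ x y z, b (x + y) z = b x z + b y z := by
      intro x y z
      simp only [hb, Matrix.mulVec_add, add_dotProduct, dotProduct_add]
      ring
    set L : (Fin n → ZMod 2) → ZMod 2 := fun x => b x a with hL
    set Z : Finset (Fin n → ZMod 2) := Finset.univ.filter (fun x => fA x = fB x) with hZ
    have hcardfun : Fintype.card (Fin n → ZMod 2) = 2 ^ n := by simp
    have hZS : Z.card + S.card = 2 ^ n := by
      rw [hZ, hS]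
      have := Finset.card_filter_add_card_filter_not
        (s := (Finset.univ : Finset (Fin n → ZMod 2))) (p := fun x => fA x = fB x)
      rw [Finset.card_univ, hcardfun] at this
      exact this
    -- the set where L = 1 has size at most 2^(n-1)
    set M : Finset (Fin n → ZMod 2) := Finset.univ.filter (fun x => L x = 1) with hM
    have hM2 : 2 * M.card ≤ 2 ^ n := by
      by_cases hex : ∃ d, L d = 1
      · obtain ⟨d, hd⟩ := hex
        set M0 : Finset (Fin n → ZMod 2) := Finset.univ.filter (fun x => L x ≠ 1) with hM0
        have hMM0 : M.card ≤ M0.card := by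
          apply Finset.card_le_card_of_injOn (fun x => x + d)
          · intro x hx
            rw [hM, Finset.mem_coe, Finset.mem_filter] at hx
            rw [hM0, Finset.mem_coe, Finset.mem_filter]
            refine ⟨Finset.mem_univ _, ?_⟩
            have : L (x + d) = L x + L d := hbadd x d a
            rw [this, hx.2, hd]
            decide
          · intro x _ y _ hxy
            have := congrArg (fun z => z + d) hxy
            simpa using this
        have hsplit : M.card + M0.card = 2 ^ n := by
          rw [hM, hM0]
          have := Finset.card_filter_add_card_filter_not
            (s := (Finset.univ : Finset (Fin n → ZMod 2))) (p := fun x => L x = 1)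
          rw [Finset.card_univ, hcardfun] at this
          exact this
        omega
      · push_neg at hex
        have : M = ∅ := by
          rw [hM, Finset.filter_eq_empty_iff]
          intro x _; exact hex x
        rw [this]
        simp
    -- split Z by L
    set Z0 : Finset (Fin n → ZMod 2) := Z.filter (fun x => L x = 0) with hZ0
    set Z1 : Finset (Fin n → ZMod 2) := Z.filter (fun x => ¬ L x = 0) with hZ1
    have hZsplit : Z0.card + Z1.card = Z.card :=
      Finset.card_filter_add_card_filter_not (p := fun x => L x = 0)
    have hZ1M : Z1.card ≤ M.card := by
      apply Finset.card_le_card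
      intro x hx
      rw [hZ1, Finset.mem_filter] at hx
      rw [hM, Finset.mem_filter]
      refine ⟨Finset.mem_univ _, ?_⟩
      have := hx.2
      revert this
      generalize L x = u
      revert u; decide
    have hZ0S : Z0.card ≤ S.card := by
      apply Finset.card_le_card_of_injOn (fun x => x + a)
      · intro x hx
        rw [hZ0, Finset.mem_coe, Finset.mem_filter, hZ, Finset.mem_filter] at hx
        obtain ⟨⟨_, hxz⟩, hxl⟩ := hx
        rw [hS, Finset.mem_coe, Finset.mem_filter]
        refine ⟨Finset.mem_univ _, ?_⟩
        have hFx : F x = 0 := by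
          show fA x + fB x = 0
          rw [hxz]
          generalize fB x = u
          revert u; decide
        have : F (x + a) = 1 := by
          rw [hFadd, hFx, hFa]
          have : b x a = 0 := hxl
          rw [this]
          decide
        rw [zmod2_ne_iff]
        exact this
      · intro x _ y _ hxy
        have := congrArg (fun z => z + a) hxy
        simpa using this
    -- conclude 2^n ≤ 4 * S.card
    have hkey : 2 ^ n ≤ 4 * S.card := by omega
    rw [le_div_iff₀ (by positivity : (0:ℝ) < 2 ^ n)]
    have h' : ((2:ℝ) ^ n) ≤ 4 * (S.card : ℝ) := by exact_mod_cast hkey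
    linarith
end

section
/- Let n ≥ 1 and let A be any n×n matrix over F₂. Then the average over a uniformly random n×n matrix B over F₂ of the squared agreement probability satisfies 2^{−n²} Σ_{B ∈ F₂^{n×n}} ( Pr_{x ∼ F₂ⁿ}[xᵀAx = xᵀBx] )² ≤ 9/16 + (7/16)·2^{−n(n+1)/2}. -/
open Matrix Finset

noncomputable section
namespace Deg2Aux

def χ (a : ZMod 2) : ℤ := if a = 0 then 1 else -1

lemma χ_add (a b : ZMod 2) : χ (a + b) = χ a * χ b := by revert a b; decide

lemma χ_zero : χ 0 = 1 := rfl

lemma χ_sum {ι : Type*} (s : Finset ι) (f : ι → ZMod 2) :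
    χ (∑ i ∈ s, f i) = ∏ i ∈ s, χ (f i) := by
  induction s using Finset.cons_induction with
  | empty => simp [χ_zero]
  | cons a s ha ih => simp [Finset.sum_cons, Finset.prod_cons, χ_add, ih]

lemma sum_χ_single (v : ZMod 2) : ∑ a : ZMod 2, χ (a * v) = if v = 0 then 2 else 0 := by
  revert v; decide

lemma sum_χ_dot (n : ℕ) (v : Fin n → ZMod 2) :
    ∑ x : Fin n → ZMod 2, χ (x ⬝ᵥ v) = if v = 0 then 2 ^ n else 0 := by
  have h1 : ∀ x : Fin n → ZMod 2, χ (x ⬝ᵥ v) = ∏ i, χ (x i * v i) := by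
    intro x; rw [dotProduct, χ_sum]
  simp_rw [h1]
  rw [← Fintype.piFinset_univ,
    Finset.sum_prod_piFinset (Finset.univ : Finset (ZMod 2)) (fun i a => χ (a * v i))]
  simp_rw [sum_χ_single]
  by_cases hv : v = 0
  · simp [hv]
  · rw [if_neg hv]
    obtain ⟨i, hi⟩ := Function.ne_iff.mp hv
    exact Finset.prod_eq_zero (Finset.mem_univ i) (by simp only [Pi.zero_apply] at hi; simp [hi])


variable {n : ℕ}

/-- quadratic form -/
def q (C : Matrix (Fin n) (Fin n) (ZMod 2)) (x : Fin n → ZMod 2) : ZMod 2 :=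
  x ⬝ᵥ C.mulVec x

lemma q_eval (C : Matrix (Fin n) (Fin n) (ZMod 2)) (x : Fin n → ZMod 2) :
    q C x = ∑ i, ∑ j, x i * C i j * x j := by
  simp [q, dotProduct, Matrix.mulVec, Finset.mul_sum, mul_assoc]

lemma dot_swap (C : Matrix (Fin n) (Fin n) (ZMod 2)) (x y : Fin n → ZMod 2) :
    y ⬝ᵥ C.mulVec x = x ⬝ᵥ Cᵀ.mulVec y := by
  simp only [dotProduct, Matrix.mulVec, Finset.mul_sum, Matrix.transpose_apply]
  rw [Finset.sum_comm]
  apply Finset.sum_congr rfl; intro i _; apply Finset.sum_congr rfl; intro j _; ring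

lemma q_add (C : Matrix (Fin n) (Fin n) (ZMod 2)) (x h : Fin n → ZMod 2) :
    q C (x + h) = q C x + q C h + x ⬝ᵥ (C + Cᵀ).mulVec h := by
  simp only [q, Matrix.mulVec_add, Matrix.add_mulVec, dotProduct_add,
    add_dotProduct]
  rw [dot_swap C x h]
  ring

lemma q_cancel (C : Matrix (Fin n) (Fin n) (ZMod 2)) (x h : Fin n → ZMod 2) :
    q C x + q C (x + h) = q C h + x ⬝ᵥ (C + Cᵀ).mulVec h := by
  rw [q_add]
  rw [show q C x + (q C x + q C h + x ⬝ᵥ (C + Cᵀ).mulVec h)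
      = (q C x + q C x) + (q C h + x ⬝ᵥ (C + Cᵀ).mulVec h) by ring,
    CharTwo.add_self_eq_zero, zero_add]

/-- character sum -/
def S (C : Matrix (Fin n) (Fin n) (ZMod 2)) : ℤ := ∑ x : Fin n → ZMod 2, χ (q C x)

def K (C : Matrix (Fin n) (Fin n) (ZMod 2)) : Finset (Fin n → ZMod 2) :=
  Finset.univ.filter (fun h => (C + Cᵀ).mulVec h = 0)

lemma S_sq (C : Matrix (Fin n) (Fin n) (ZMod 2)) :
    S C ^ 2 = 2 ^ n * ∑ h ∈ K C, χ (q C h) := by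
  have : S C ^ 2 = ∑ x : Fin n → ZMod 2, ∑ y : Fin n → ZMod 2, χ (q C x + q C y) := by
    rw [sq, S, Finset.sum_mul_sum]
    simp_rw [χ_add]
  rw [this]
  have reindex : ∀ x : Fin n → ZMod 2,
      ∑ y : Fin n → ZMod 2, χ (q C x + q C y)
        = ∑ h : Fin n → ZMod 2, χ (q C x + q C (x + h)) :=
    fun x => (Fintype.sum_equiv (Equiv.addLeft x) _ _ (fun h => rfl)).symm
  simp_rw [reindex, q_cancel]
  rw [Finset.sum_comm]
  have key : ∀ h : Fin n → ZMod 2,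
      ∑ x : Fin n → ZMod 2, χ (q C h + x ⬝ᵥ (C + Cᵀ).mulVec h)
        = χ (q C h) * (if (C + Cᵀ).mulVec h = 0 then (2:ℤ) ^ n else 0) := by
    intro h
    simp_rw [χ_add, ← Finset.mul_sum]
    rw [sum_χ_dot]
  simp_rw [key]
  simp_rw [mul_ite, mul_zero, ← Finset.sum_filter, K, Finset.mul_sum]
  apply Finset.sum_congr rfl; intros; ring


lemma addself (v : Fin n → ZMod 2) : v + v = 0 := by
  funext i; exact CharTwo.add_self_eq_zero _

lemma mem_K {C : Matrix (Fin n) (Fin n) (ZMod 2)} {h : Fin n → ZMod 2} :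
    h ∈ K C ↔ (C + Cᵀ).mulVec h = 0 := by simp [K]

lemma T_eq_zero {C : Matrix (Fin n) (Fin n) (ZMod 2)} {h0 : Fin n → ZMod 2}
    (h0K : h0 ∈ K C) (hq : q C h0 ≠ 0) : ∑ h ∈ K C, χ (q C h) = 0 := by
  have hmem : ∀ i : Fin n → ZMod 2, i ∈ K C ↔ h0 + i ∈ K C := by
    intro i
    simp only [mem_K, Matrix.mulVec_add, mem_K.mp h0K, zero_add]
  have hval : ∀ i ∈ K C, χ (q C (h0 + i)) = - χ (q C i) := by
    intro i hi
    have : q C (h0 + i) = q C h0 + q C i := by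
      rw [q_add]
      have : (C + Cᵀ).mulVec i = 0 := mem_K.mp hi
      simp [this]
    have h1 : q C h0 = 1 := by
      have := hq; revert this; generalize q C h0 = a; revert a; decide
    rw [this, h1]
    generalize q C i = a; revert a; decide
  have cancel : ∀ a : Fin n → ZMod 2, h0 + (h0 + a) = a := by
    intro a; rw [← add_assoc, addself, zero_add]
  have key : ∑ h ∈ K C, χ (q C h) = ∑ h ∈ K C, - χ (q C h) := by
    calc ∑ h ∈ K C, χ (q C h) = ∑ h ∈ K C, χ (q C (h0 + h)) := by
          refine Finset.sum_nbij' (fun h => h0 + h) (fun h => h0 + h) ?_ ?_ ?_ ?_ ?_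
          · intro a ha; exact (hmem a).mp ha
          · intro a ha
            have := (hmem (h0 + a)).mpr (by rwa [cancel])
            exact this
          · intro a _; exact cancel a
          · intro a _; exact cancel a
          · intro a ha
            show χ (q C a) = χ (q C (h0 + (h0 + a)))
            rw [cancel]
      _ = ∑ h ∈ K C, - χ (q C h) := Finset.sum_congr rfl hval
  have : (2 : ℤ) * ∑ h ∈ K C, χ (q C h) = 0 := by
    rw [Finset.sum_neg_distrib] at key
    linarith [key]
  linarith [this]


lemma card_K_dvd (C : Matrix (Fin n) (Fin n) (ZMod 2)) : (K C).card ∣ 2 ^ n := by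
  classical
  have h1 : (K C).card = Nat.card (LinearMap.ker (Matrix.mulVecLin (C + Cᵀ))) := by
    rw [← Fintype.card_coe (K C), Nat.card_eq_fintype_card]
    apply Fintype.card_congr
    apply Equiv.subtypeEquivRight
    intro x
    simp [mem_K, Matrix.add_mulVec, Matrix.mulVec_transpose, Matrix.mulVecLin_apply, LinearMap.mem_ker]
  rw [h1]
  have hdvd := AddSubgroup.card_addSubgroup_dvd_card
    ((LinearMap.ker (Matrix.mulVecLin (C + Cᵀ))).toAddSubgroup)
  have hcard : Nat.card (Fin n → ZMod 2) = 2 ^ n := by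
    simp [Nat.card_eq_fintype_card]
  rw [hcard] at hdvd
  exact hdvd

lemma two_S_le {C : Matrix (Fin n) (Fin n) (ZMod 2)} (hC : ∃ x, q C x ≠ 0) :
    2 * S C ≤ 2 ^ n := by
  by_cases hK : ∃ h0 ∈ K C, q C h0 ≠ 0
  · obtain ⟨h0, h0K, hq⟩ := hK
    have h2 : S C ^ 2 = 0 := by rw [S_sq, T_eq_zero h0K hq, mul_zero]
    have h3 : S C = 0 := by
      have := sq_eq_zero_iff.mp h2
      exact this
    rw [h3]; positivity
  · push_neg at hK
    have hT : ∑ h ∈ K C, χ (q C h) = (K C).card := by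
      rw [Finset.sum_congr rfl (fun h hh => by rw [hK h hh, χ_zero]), Finset.sum_const,
        nsmul_eq_mul, mul_one]
    obtain ⟨k, hkn, hcard⟩ := (Nat.dvd_prime_pow Nat.prime_two).mp (card_K_dvd C)
    have hklt : k < n := by
      rcases lt_or_eq_of_le hkn with h | h
      · exact h
      · exfalso
        rw [h] at hcard
        have : (K C).card = Fintype.card (Fin n → ZMod 2) := by
          rw [hcard]; simp
        have huniv : K C = Finset.univ := Finset.eq_univ_of_card _ this
        obtain ⟨x, hx⟩ := hC
        exact hx (hK x (huniv ▸ Finset.mem_univ x))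
    have hS2 : S C ^ 2 = 2 ^ (n + k) := by
      rw [S_sq, hT, hcard, pow_add]; push_cast; ring
    set m := (S C).natAbs with hm
    have hm2 : (m : ℤ) ^ 2 = 2 ^ (n + k) := by
      rw [hm, Int.natAbs_sq, hS2]
    have hmn : m ^ 2 = 2 ^ (n + k) := by exact_mod_cast hm2
    have hmdvd : m ∣ 2 ^ (n + k) := ⟨m, by rw [← hmn]; ring⟩
    obtain ⟨e, hek, he⟩ := (Nat.dvd_prime_pow Nat.prime_two).mp hmdvd
    have h2e : 2 * e = n + k := by
      have : (2:ℕ) ^ (2 * e) = 2 ^ (n + k) := by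
        rw [← hmn, he]; ring
      exact Nat.pow_right_injective (by norm_num) this
    have hen : e + 1 ≤ n := by omega
    have : S C ≤ (2:ℤ) ^ e := by
      calc S C ≤ (m : ℤ) := Int.le_natAbs
        _ = 2 ^ e := by rw [he]; push_cast; ring
    calc 2 * S C ≤ 2 * 2 ^ e := by linarith
      _ = 2 ^ (e + 1) := by ring
      _ ≤ 2 ^ n := pow_le_pow_right₀ (by norm_num) hen


lemma q_single (C : Matrix (Fin n) (Fin n) (ZMod 2)) (i : Fin n) :
    q C (Pi.single i 1) = C i i := by
  simp [q_eval, Pi.single_apply, ite_mul, mul_ite]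

lemma q_pair (C : Matrix (Fin n) (Fin n) (ZMod 2)) {i j : Fin n} (hij : i ≠ j) :
    q C (Pi.single i 1 + Pi.single j 1) = C i i + C i j + C j i + C j j := by
  simp only [q_eval, Pi.add_apply, Pi.single_apply]
  simp only [add_mul, mul_add, ite_mul, mul_ite, one_mul, mul_one, zero_mul, mul_zero,
    Finset.sum_add_distrib, Finset.sum_ite_eq', Finset.mem_univ, if_true, hij, hij.symm,
    if_false]
  abel

lemma good_diag {C : Matrix (Fin n) (Fin n) (ZMod 2)} (hg : ∀ x, q C x = 0) (i : Fin n) :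
    C i i = 0 := by
  have := hg (Pi.single i 1); rwa [q_single] at this

lemma good_symm {C : Matrix (Fin n) (Fin n) (ZMod 2)} (hg : ∀ x, q C x = 0) {i j : Fin n}
    (hij : i ≠ j) : C i j = C j i := by
  have h := hg (Pi.single i 1 + Pi.single j 1)
  rw [q_pair C hij, good_diag hg i, good_diag hg j, zero_add, add_zero] at h
  have : C i j + (C i j + C j i) = C i j + 0 := by rw [h]
  rw [← add_assoc, CharTwo.add_self_eq_zero, zero_add, add_zero] at this
  exact this.symm

lemma card_upper : Fintype.card {p : Fin n × Fin n // p.1 < p.2} = n * (n - 1) / 2 := by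
  rw [Fintype.card_subtype, Finset.card_filter, Fintype.sum_prod_type, Finset.sum_comm]
  have h1 : ∀ j : Fin n, (∑ i : Fin n, if i < j then (1:ℕ) else 0) = (j : ℕ) := by
    intro j
    rw [← Finset.card_filter]
    have : ({x | x < j} : Finset (Fin n)) = Finset.Iio j := Finset.filter_gt_eq_Iio
    rw [this, Fin.card_Iio]
  simp_rw [h1]
  rw [Fin.sum_univ_eq_sum_range (fun i => i), Finset.sum_range_id]


lemma eq_iff_add (a b : ZMod 2) : a = b ↔ a + b = 0 := by revert a b; decide

lemma solve_entry (a b c d : ZMod 2) (h : a + b = c + d) : b = a + c + d := by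
  revert h; revert a b c d; decide

lemma card_good (A : Matrix (Fin n) (Fin n) (ZMod 2)) :
    (Finset.univ.filter (fun B : Matrix (Fin n) (Fin n) (ZMod 2) =>
      ∀ x, q (A + B) x = 0)).card ≤ 2 ^ (n * (n - 1) / 2) := by
  classical
  have key := Finset.card_le_card_of_injOn
    (f := fun (B : Matrix (Fin n) (Fin n) (ZMod 2))
      (p : {p : Fin n × Fin n // p.1 < p.2}) => B p.1.1 p.1.2)
    (s := Finset.univ.filter (fun B : Matrix (Fin n) (Fin n) (ZMod 2) =>
      ∀ x, q (A + B) x = 0))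
    (t := (Finset.univ : Finset ({p : Fin n × Fin n // p.1 < p.2} → ZMod 2)))
    (fun _ _ => Finset.mem_univ _) ?_
  · calc _ ≤ _ := key
      _ = 2 ^ (n * (n - 1) / 2) := by
        rw [Finset.card_univ, Fintype.card_fun, card_upper]
        norm_num
  · intro B hB B' hB' hf
    have hgB : ∀ x, q (A + B) x = 0 := (Finset.mem_filter.mp hB).2
    have hgB' : ∀ x, q (A + B') x = 0 := (Finset.mem_filter.mp hB').2
    have hup : ∀ (i j : Fin n), i < j → B i j = B' i j := by
      intro i j hij
      exact congrFun hf ⟨(i, j), hij⟩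
    ext i j
    rcases lt_trichotomy i j with h | h | h
    · exact hup i j h
    · subst h
      have d1 : A i i + B i i = 0 := good_diag hgB i
      have d2 : A i i + B' i i = 0 := good_diag hgB' i
      have e1 : B i i = A i i := by
        have := solve_entry (A i i) (B i i) 0 0 (by rw [d1]; simp)
        simpa using this
      have e2 : B' i i = A i i := by
        have := solve_entry (A i i) (B' i i) 0 0 (by rw [d2]; simp)
        simpa using this
      rw [e1, e2]
    · have hne : i ≠ j := ne_of_gt h
      have s1 : A i j + B i j = A j i + B j i := good_symm hgB hne
      have s2 : A i j + B' i j = A j i + B' j i := good_symm hgB' hne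
      have e1 : B i j = A i j + A j i + B j i := solve_entry _ _ _ _ s1
      have e2 : B' i j = A i j + A j i + B' j i := solve_entry _ _ _ _ s2
      rw [e1, e2, hup j i h]

lemma count_eq (C : Matrix (Fin n) (Fin n) (ZMod 2)) :
    2 * ((Finset.univ.filter (fun x : Fin n → ZMod 2 => q C x = 0)).card : ℤ)
      = 2 ^ n + S C := by
  have hχ : ∀ a : ZMod 2, χ a = (if a = 0 then (2:ℤ) else 0) - 1 := by decide
  have : S C = ∑ x : Fin n → ZMod 2, ((if q C x = 0 then (2:ℤ) else 0) - 1) := by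
    rw [S]; exact Finset.sum_congr rfl (fun x _ => hχ _)
  rw [this, Finset.sum_sub_distrib, Finset.sum_ite, Finset.sum_const, Finset.sum_const,
    Finset.sum_const]
  simp [Finset.card_univ, mul_comm]

lemma ratio_sq_le_one (C : Matrix (Fin n) (Fin n) (ZMod 2)) :
    (((Finset.univ.filter (fun x : Fin n → ZMod 2 => q C x = 0)).card : ℝ) / 2 ^ n) ^ 2
      ≤ 1 := by
  have h1 : ((Finset.univ.filter (fun x : Fin n → ZMod 2 => q C x = 0)).card : ℝ)
      ≤ 2 ^ n := by
    have := Finset.card_filter_le (Finset.univ : Finset (Fin n → ZMod 2))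
      (fun x => q C x = 0)
    calc ((Finset.univ.filter (fun x : Fin n → ZMod 2 => q C x = 0)).card : ℝ)
        ≤ (Finset.univ : Finset (Fin n → ZMod 2)).card := by exact_mod_cast this
      _ = 2 ^ n := by simp [Finset.card_univ]
  have h0 : (0:ℝ) ≤ ((Finset.univ.filter (fun x : Fin n → ZMod 2 => q C x = 0)).card : ℝ)
      / 2 ^ n := by positivity
  have : ((Finset.univ.filter (fun x : Fin n → ZMod 2 => q C x = 0)).card : ℝ) / 2 ^ n
      ≤ 1 := by
    rw [div_le_one (by positivity)]; exact h1
  nlinarith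

lemma ratio_sq_le_bad {C : Matrix (Fin n) (Fin n) (ZMod 2)} (hC : ∃ x, q C x ≠ 0) :
    (((Finset.univ.filter (fun x : Fin n → ZMod 2 => q C x = 0)).card : ℝ) / 2 ^ n) ^ 2
      ≤ 9 / 16 := by
  have hZ : 4 * ((Finset.univ.filter (fun x : Fin n → ZMod 2 => q C x = 0)).card : ℤ)
      ≤ 3 * 2 ^ n := by
    have h1 := count_eq C
    have h2 := two_S_le hC
    linarith
  have hR : ((Finset.univ.filter (fun x : Fin n → ZMod 2 => q C x = 0)).card : ℝ)
      ≤ 3 / 4 * 2 ^ n := by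
    have : (4 * ((Finset.univ.filter (fun x : Fin n → ZMod 2 => q C x = 0)).card : ℤ) : ℝ)
        ≤ ((3 * 2 ^ n : ℤ) : ℝ) := by exact_mod_cast hZ
    push_cast at this
    linarith
  have h0 : (0:ℝ) ≤ ((Finset.univ.filter (fun x : Fin n → ZMod 2 => q C x = 0)).card : ℝ)
      / 2 ^ n := by positivity
  have hle : ((Finset.univ.filter (fun x : Fin n → ZMod 2 => q C x = 0)).card : ℝ) / 2 ^ n
      ≤ 3 / 4 := by
    rw [div_le_iff₀ (by positivity : (0:ℝ) < 2 ^ n)]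
    linarith
  nlinarith


lemma exp_split (hn : 1 ≤ n) : n * (n - 1) / 2 + n * (n + 1) / 2 = n ^ 2 := by
  have e1 : Even (n * (n - 1)) := by
    have := Nat.even_mul_succ_self (n - 1)
    rw [Nat.sub_add_cancel hn] at this
    rwa [mul_comm]
  have e2 : Even (n * (n + 1)) := Nat.even_mul_succ_self n
  have h1 : n * (n - 1) / 2 * 2 = n * (n - 1) :=
    Nat.div_mul_cancel e1.two_dvd
  have h2 : n * (n + 1) / 2 * 2 = n * (n + 1) :=
    Nat.div_mul_cancel e2.two_dvd
  have hx : n * (n - 1) + n = n * n := by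
    calc n * (n - 1) + n = n * ((n - 1) + 1) := by ring
      _ = n * n := by rw [Nat.sub_add_cancel hn]
  have hy : n * (n + 1) = n * n + n := by ring
  have hsq : n ^ 2 = n * n := sq n
  omega

end Deg2Aux

open Deg2Aux in
/-- Average squared agreement probability of a fixed quadratic function with a uniformly
random one: `E_B[(Pr_x[xᵀAx = xᵀBx])²] ≤ 9/16 + (7/16)·2^{-n(n+1)/2}`. -/
theorem deg2_average_squared_fidelity (n : ℕ) (hn : 1 ≤ n)
    (A : Matrix (Fin n) (Fin n) (ZMod 2)) :
    (2 ^ (n ^ 2) : ℝ)⁻¹ * ∑ B : Matrix (Fin n) (Fin n) (ZMod 2),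
        (((Finset.univ.filter (fun x : Fin n → ZMod 2 =>
            x ⬝ᵥ A.mulVec x = x ⬝ᵥ B.mulVec x)).card : ℝ) / 2 ^ n) ^ 2
      ≤ 9 / 16 + (7 / 16) * ((2 : ℝ) ^ (n * (n + 1) / 2))⁻¹ := by
  classical
  have hfilter : ∀ B : Matrix (Fin n) (Fin n) (ZMod 2),
      (Finset.univ.filter (fun x : Fin n → ZMod 2 =>
        x ⬝ᵥ A.mulVec x = x ⬝ᵥ B.mulVec x))
      = Finset.univ.filter (fun x : Fin n → ZMod 2 => q (A + B) x = 0) := by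
    intro B
    apply Finset.filter_congr
    intro x _
    have hq : q (A + B) x = x ⬝ᵥ A.mulVec x + x ⬝ᵥ B.mulVec x := by
      simp [q, Matrix.add_mulVec, dotProduct_add]
    rw [hq]
    exact (by simpa using eq_iff_add (x ⬝ᵥ A.mulVec x) (x ⬝ᵥ B.mulVec x))
  simp_rw [hfilter]
  set F : Matrix (Fin n) (Fin n) (ZMod 2) → ℝ := fun B =>
    (((Finset.univ.filter (fun x : Fin n → ZMod 2 => q (A + B) x = 0)).card : ℝ) / 2 ^ n) ^ 2
    with hF
  set G := Finset.univ.filter (fun B : Matrix (Fin n) (Fin n) (ZMod 2) =>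
    ∀ x, q (A + B) x = 0) with hGdef
  set Gc := Finset.univ.filter (fun B : Matrix (Fin n) (Fin n) (ZMod 2) =>
    ¬ ∀ x, q (A + B) x = 0) with hGcdef
  have hsplit : ∑ B, F B = ∑ B ∈ G, F B + ∑ B ∈ Gc, F B :=
    (Finset.sum_filter_add_sum_filter_not Finset.univ _ F).symm
  have hb1 : ∑ B ∈ G, F B ≤ (G.card : ℝ) * 1 := by
    have := Finset.sum_le_card_nsmul G F 1 (fun B _ => ratio_sq_le_one (A + B))
    simpa [nsmul_eq_mul] using this
  have hb2 : ∑ B ∈ Gc, F B ≤ (Gc.card : ℝ) * (9 / 16) := by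
    have := Finset.sum_le_card_nsmul Gc F (9 / 16) ?_
    · simpa [nsmul_eq_mul] using this
    · intro B hB
      have hbad : ¬ ∀ x, q (A + B) x = 0 := (Finset.mem_filter.mp hB).2
      push_neg at hbad
      exact ratio_sq_le_bad hbad
  have hcardtot : G.card + Gc.card = 2 ^ (n ^ 2) := by
    rw [hGdef, hGcdef, Finset.card_filter_add_card_filter_not, Finset.card_univ]
    have : Fintype.card (Matrix (Fin n) (Fin n) (ZMod 2))
        = Fintype.card (Fin n → Fin n → ZMod 2) := Fintype.card_congr (Equiv.refl _)
    rw [this]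
    simp [Fintype.card_fun, ← pow_mul, sq]
  have hGle : (G.card : ℝ) ≤ 2 ^ (n * (n - 1) / 2) := by
    exact_mod_cast card_good A
  have hGcle : (Gc.card : ℝ) = 2 ^ (n ^ 2) - G.card := by
    have h : ((G.card : ℝ) + (Gc.card : ℝ)) = ((2:ℝ) ^ (n ^ 2)) := by
      exact_mod_cast hcardtot
    linarith
  have hsum : ∑ B, F B ≤ 9 / 16 * 2 ^ (n ^ 2) + 7 / 16 * 2 ^ (n * (n - 1) / 2) := by
    rw [hsplit]
    have : (G.card : ℝ) * 1 + (Gc.card : ℝ) * (9 / 16)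
        = 9 / 16 * 2 ^ (n ^ 2) + 7 / 16 * (G.card : ℝ) := by
      rw [hGcle]; ring
    nlinarith [hb1, hb2, hGle]
  have hpos : (0:ℝ) < 2 ^ (n ^ 2) := by positivity
  rw [inv_mul_le_iff₀ hpos]
  have hpow : (2:ℝ) ^ (n ^ 2) = 2 ^ (n * (n - 1) / 2) * 2 ^ (n * (n + 1) / 2) := by
    rw [← pow_add, exp_split hn]
  have heq : ((2:ℝ) ^ (n * (n + 1) / 2))⁻¹ * 2 ^ (n ^ 2) = 2 ^ (n * (n - 1) / 2) := by
    rw [hpow]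
    field_simp
  calc ∑ B, F B ≤ 9 / 16 * 2 ^ (n ^ 2) + 7 / 16 * 2 ^ (n * (n - 1) / 2) := hsum
    _ = (9 / 16 + 7 / 16 * ((2:ℝ) ^ (n * (n + 1) / 2))⁻¹) * 2 ^ (n ^ 2) := by
      rw [add_mul, mul_assoc, heq]
    _ = 2 ^ (n ^ 2) * (9 / 16 + 7 / 16 * ((2:ℝ) ^ (n * (n + 1) / 2))⁻¹) := by
      rw [mul_comm]
end
end
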